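/- arXiv:2111.00863 — 8 statements merged into one kernel-verified Lean document; each statement's English description precedes it below -/
import Mathlib

section
/- Any finite word whose exponent is at least 2 (i.e., which can be written as u^s with s ≥ 2 for its shortest period) is closed. -/
open List

variable {α : Type*}

/-- Number of occurrences of `u` as a factor of `w` (by starting position). -/
def occCount [DecidableEq α] (u w : List α) : ℕ :=
  ((Finset.range (w.length + 1)).filter
    (fun i => i + u.length ≤ w.length ∧ (w.drop i).take u.length = u)).card

/-- A finite word is closed if it has length ≤ 1 or it has a border occurring
exactly twice in it (as prefix and as suffix). -/
def ClosedWord [DecidableEq α] (w : List α) : Prop :=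
  w.length ≤ 1 ∨ ∃ k ∈ Finset.Ioo 0 w.length,
    (w.take k) <:+ w ∧ occCount (w.take k) w = 2

instance [DecidableEq α] (w : List α) : Decidable (ClosedWord w) := by
  unfold ClosedWord; infer_instance

/-- The finite set of distinct closed factors of `w`. -/
def closedFactors [DecidableEq α] (w : List α) : Finset (List α) :=
  (w.inits.flatMap List.tails).toFinset.filter ClosedWord

/-- The number of distinct closed factors of `w`. -/
def clCount [DecidableEq α] (w : List α) : ℕ := (closedFactors w).card

/-- `t` is a period of the finite word `w`. -/
def HasPeriod (w : List α) (t : ℕ) : Prop := 0 < t ∧ w.drop t <+: w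

/-- Factor of the infinite word `w` starting at `i` of length `m`. -/
def factorAt (w : ℕ → α) (i m : ℕ) : List α := (List.range m).map (fun j => w (i + j))

/-- `u` occurs in the infinite word `w` at position `i`. -/
def occursAt (w : ℕ → α) (u : List α) (i : ℕ) : Prop := factorAt w i u.length = u

/-- An infinite word is aperiodic if it is not eventually periodic. -/
def Aperiodic' (w : ℕ → α) : Prop := ¬ ∃ p, 0 < p ∧ ∃ N, ∀ n ≥ N, w (n + p) = w n

/-- A finite word is primitive if it is not an integer power of a shorter word. -/
def Primitive (u : List α) : Prop :=
  u ≠ [] ∧ ∀ (v : List α) (k : ℕ), 2 ≤ k → u ≠ (List.replicate k v).flatten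

lemma ptwise_prefix (w : List α) (i k : ℕ) (hik : i + k ≤ w.length)
    (h : ∀ j (hj : j < k), w[i + j]'(by omega) = w[j]'(by omega)) :
    (w.drop i).take k = w.take k := by
  apply List.ext_getElem
  · simp; omega
  · intro j h1 h2
    simp only [List.getElem_take, List.getElem_drop]
    exact h j (by simp at h1; omega)

lemma prefix_ptwise (w : List α) (i k : ℕ) (hik : i + k ≤ w.length)
    (h : (w.drop i).take k = w.take k) :
    ∀ j (hj : j < k), w[i + j]'(by omega) = w[j]'(by omega) := by
  intro j hj
  have h1 : j < ((w.drop i).take k).length := by simp; omega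
  have := List.getElem_of_eq h h1
  simpa using this


lemma gidx (w : List α) {a b : ℕ} (h : a = b) (ha : a < w.length) :
    w[a]'ha = w[b]'(h ▸ ha) := by subst h; rfl

/-- a word whose exponent (w.r.t. its shortest period) is ≥ 2 is closed. -/
theorem stmt1 [DecidableEq α] (w : List α) (t : ℕ)
    (ht : _root_.HasPeriod w t) (hmin : ∀ s, _root_.HasPeriod w s → t ≤ s)
    (h2 : 2 * t ≤ w.length) : ClosedWord w := by 
  obtain ⟨ht0, htp⟩ := ht
  set n := w.length with hn
  have hdt : w.drop t = w.take (n - t) := by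
    have := List.prefix_iff_eq_take.mp htp
    simpa using this
  have hper : ∀ j (hj : j + t < n), w[j + t]'hj = w[j]'(by omega) := by
    intro j hj
    have hj' : j < (w.drop t).length := by simp; omega
    have := htp.getElem hj'
    rw [List.getElem_drop] at this
    rw [gidx w (show j + t = t + j by omega)]
    exact this
  right
  refine ⟨n - t, ?_, ?_, ?_⟩
  · simp only [Finset.mem_Ioo]; omega
  · rw [← hdt]; exact List.drop_suffix t w
  · unfold occCount
    have hlt : (w.take (n - t)).length = n - t := by simp; omega
    have hfe : ((Finset.range (n + 1)).filter
        (fun i => i + (w.take (n - t)).length ≤ n ∧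
          (w.drop i).take (w.take (n - t)).length = w.take (n - t))) = {0, t} := by
      ext i
      simp only [Finset.mem_filter, Finset.mem_range, Finset.mem_insert,
        Finset.mem_singleton, hlt]
      constructor
      · rintro ⟨hi1, hi2, hi3⟩
        by_contra hcon
        push_neg at hcon
        obtain ⟨hc0, hct⟩ := hcon
        have hi0 : 0 < i := Nat.pos_of_ne_zero hc0
        have hit : i < t := by
          rcases Nat.lt_or_ge i t with h | h
          · exact h
          · exfalso; exact hct (by omega)
        have hptw := prefix_ptwise w i (n - t) (by omega) hi3
        have hall : ∀ j (hj : j + i < n), w[j + i]'hj = w[j]'(by omega) := by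
          intro j
          induction j using Nat.strong_induction_on with
          | _ j ih =>
            intro hj
            by_cases hjk : j < n - t
            · have := hptw j hjk
              rw [gidx w (show j + i = i + j by omega)]
              exact this
            · have hjt : t ≤ j := by omega
              have e1 : w[j + i]'hj = w[(j - t) + i]'(by omega) := by
                have := hper (j - t + i) (by omega)
                rw [gidx w (show j + i = j - t + i + t by omega)]
                exact this
              have e2 : w[j]'(by omega) = w[j - t]'(by omega) := by
                have := hper (j - t) (by omega)
                rw [gidx w (show j = j - t + t by omega)]
                exact this
              rw [e1, e2]
              exact ih (j - t) (by omega) (by omega)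
        have hp : _root_.HasPeriod w i := by
          refine ⟨hi0, ?_⟩
          rw [List.prefix_iff_eq_take]
          apply List.ext_getElem
          · simp
          · intro j h1 h2
            simp only [List.getElem_take, List.getElem_drop]
            have := hall j (by simp at h1; omega)
            rw [gidx w (show i + j = j + i by omega)]
            exact this
        have := hmin i hp
        omega
      · rintro (rfl | rfl)
        · refine ⟨by omega, by omega, by simp⟩
        · refine ⟨by omega, by omega, ?_⟩
          rw [hdt.symm]
          exact List.take_of_length_le (by simp; omega)
    rw [hfe]
    rw [Finset.card_insert_of_notMem (by simp; omega), Finset.card_singleton]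
end

section
/- Let u and a be a finite nonempty word and a letter, let t be the longest suffix of ua that occurs at least twice in ua, and let z be the longest suffix of t occurring at least twice in t. Then the number of closed factors of ua that end at the last position of ua and do not occur in u is at most |t| − |z|. -/
open List

variable {α : Type*}

namespace Stmt4Aux

variable {α : Type*} [DecidableEq α]

/-- `b` occurs in `w` at position `i`. -/
def OccAt (b w : List α) (i : ℕ) : Prop :=
  i + b.length ≤ w.length ∧ (w.drop i).take b.length = b

omit [DecidableEq α] in
lemma occAt_suffix {b w : List α} (h : b <:+ w) : OccAt b w (w.length - b.length) := by
  have hl := h.length_le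
  refine ⟨by omega, ?_⟩
  rw [← suffix_iff_eq_drop.mp h, take_length]

omit [DecidableEq α] in
lemma occAt_trans {b v w : List α} {i : ℕ} (hv : v <:+ w) (h : OccAt b v i) :
    OccAt b w (w.length - v.length + i) := by
  obtain ⟨p, rfl⟩ := hv
  obtain ⟨h1, h2⟩ := h
  have hp : (p ++ v).length - v.length = p.length := by simp
  refine ⟨by simp; omega, ?_⟩
  rw [hp, drop_length_add_append, h2]

omit [DecidableEq α] in
lemma occAt_sub {b z w : List α} {i : ℕ} (hb : b <:+ z) (h : OccAt z w i) :
    OccAt b w (i + (z.length - b.length)) := by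
  obtain ⟨h1, h2⟩ := h
  have hl := hb.length_le
  refine ⟨by omega, ?_⟩
  have e1 : (w.drop i).drop (z.length - b.length) = w.drop (i + (z.length - b.length)) :=
    drop_drop
  rw [← e1]
  have e2 : ((w.drop i).drop (z.length - b.length)).take b.length
      = ((w.drop i).take z.length).drop (z.length - b.length) := by
    rw [drop_take]
    congr 1
    omega
  rw [e2, h2, ← suffix_iff_eq_drop.mp hb]

omit [DecidableEq α] in
lemma suffix_suffix {b z w : List α} (h1 : b <:+ w) (h2 : z <:+ w)
    (hl : b.length ≤ z.length) : b <:+ z := by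
  rw [← reverse_prefix] at h1 h2 ⊢
  exact prefix_of_prefix_length_le h1 h2 (by simpa using hl)

lemma two_le_occCount {b w : List α} {i j : ℕ} (hij : i ≠ j)
    (hi : OccAt b w i) (hj : OccAt b w j) : 2 ≤ occCount b w := by
  unfold occCount
  have hmem : ∀ x, OccAt b w x → x ∈ (Finset.range (w.length + 1)).filter
      (fun i => i + b.length ≤ w.length ∧ (w.drop i).take b.length = b) := by
    intro x hx
    simp only [Finset.mem_filter, Finset.mem_range]
    exact ⟨by have := hx.1; omega, hx.1, hx.2⟩
  have hsub : ({i, j} : Finset ℕ) ⊆ (Finset.range (w.length + 1)).filter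
      (fun i => i + b.length ≤ w.length ∧ (w.drop i).take b.length = b) := by
    intro x hx
    simp only [Finset.mem_insert, Finset.mem_singleton] at hx
    rcases hx with rfl | rfl
    · exact hmem _ hi
    · exact hmem _ hj
  calc 2 = ({i, j} : Finset ℕ).card := by
        rw [Finset.card_insert_of_notMem (by simpa using hij), Finset.card_singleton]
    _ ≤ _ := Finset.card_le_card hsub

lemma three_le_occCount {b w : List α} {i j k : ℕ} (hij : i ≠ j) (hik : i ≠ k) (hjk : j ≠ k)
    (hi : OccAt b w i) (hj : OccAt b w j) (hk : OccAt b w k) : 3 ≤ occCount b w := by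
  unfold occCount
  have hmem : ∀ x, OccAt b w x → x ∈ (Finset.range (w.length + 1)).filter
      (fun i => i + b.length ≤ w.length ∧ (w.drop i).take b.length = b) := by
    intro x hx
    simp only [Finset.mem_filter, Finset.mem_range]
    exact ⟨by have := hx.1; omega, hx.1, hx.2⟩
  have hsub : ({i, j, k} : Finset ℕ) ⊆ (Finset.range (w.length + 1)).filter
      (fun i => i + b.length ≤ w.length ∧ (w.drop i).take b.length = b) := by
    intro x hx
    simp only [Finset.mem_insert, Finset.mem_singleton] at hx
    rcases hx with rfl | rfl | rfl
    · exact hmem _ hi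
    · exact hmem _ hj
    · exact hmem _ hk
  calc 3 = ({i, j, k} : Finset ℕ).card := by
        rw [Finset.card_insert_of_notMem (by simp [hij, hik]),
          Finset.card_insert_of_notMem (by simpa using hjk), Finset.card_singleton]
    _ ≤ _ := Finset.card_le_card hsub

lemma exists_two_of_occCount {b w : List α} (h : 2 ≤ occCount b w) :
    ∃ i j, i ≠ j ∧ OccAt b w i ∧ OccAt b w j := by
  unfold occCount at h
  obtain ⟨i, hi, j, hj, hij⟩ := Finset.one_lt_card.mp h
  simp only [Finset.mem_filter, Finset.mem_range] at hi hj
  exact ⟨i, j, hij, ⟨hi.2.1, hi.2.2⟩, ⟨hj.2.1, hj.2.2⟩⟩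

end Stmt4Aux

/-- with `t` the longest repeated suffix of `u ++ [a]` and `z` the longest
repeated suffix of `t`, the number of closed factors of `u ++ [a]` ending at its last
position and not occurring in `u` is at most `|t| - |z|`. -/
theorem stmt4 [DecidableEq α] (u t z : List α) (a : α) (hu : u ≠ [])
    (ht : t <:+ u ++ [a]) (ht2 : 2 ≤ occCount t (u ++ [a]))
    (htmax : ∀ s : List α, s <:+ u ++ [a] → 2 ≤ occCount s (u ++ [a]) → s.length ≤ t.length)
    (hz : z <:+ t) (hz2 : 2 ≤ occCount z t)
    (hzmax : ∀ s : List α, s <:+ t → 2 ≤ occCount s t → s.length ≤ z.length) :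
    (((u ++ [a]).tails.toFinset.filter
        (fun v => ClosedWord v ∧ ¬ v <:+: u)).card ≤ t.length - z.length) := by
  classical
  set w := u ++ [a] with hw
  have hwl : w.length = u.length + 1 := by simp [hw]
  have htwl := ht.length_le
  -- |z| < |t|
  have hzlt : z.length < t.length := by
    obtain ⟨i, j, hij, hi, hj⟩ := Stmt4Aux.exists_two_of_occCount hz2
    have h1 := hi.1
    have h2 := hj.1
    omega
  set S := (w.tails.toFinset.filter (fun v => ClosedWord v ∧ ¬ v <:+: u)) with hS
  have hmem : ∀ v ∈ S, v <:+ w ∧ ClosedWord v ∧ ¬ v <:+: u := by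
    intro v hv
    simp only [hS, Finset.mem_filter, List.mem_toFinset, List.mem_tails] at hv
    exact ⟨hv.1, hv.2.1, hv.2.2⟩
  -- every member is longer than t
  have hlen : ∀ v ∈ S, t.length < v.length := by
    intro v hv
    obtain ⟨hvs, _, hvnot⟩ := hmem v hv
    by_contra hle
    push_neg at hle
    apply hvnot
    have hvt : v <:+ t := Stmt4Aux.suffix_suffix hvs ht hle
    obtain ⟨i, j, hij, hi, hj⟩ := Stmt4Aux.exists_two_of_occCount ht2
    set i0 := if i = w.length - t.length then j else i with hi0
    have hocc : Stmt4Aux.OccAt t w i0 := by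
      rw [hi0]; split <;> assumption
    have hne : i0 ≠ w.length - t.length := by
      rw [hi0]; split
      · omega
      · assumption
    have hil := hocc.1
    have h3 : i0 + t.length ≤ u.length := by omega
    have hocc2 := Stmt4Aux.occAt_sub hvt hocc
    set j0 := i0 + (t.length - v.length) with hj0
    have hvtl := hvt.length_le
    have h4 : j0 + v.length ≤ u.length := by omega
    have h5 := hocc2.2
    have e1 : w.drop j0 = u.drop j0 ++ [a] := by
      rw [hw]
      exact drop_append_of_le_length (by omega)
    have e2 : (w.drop j0).take v.length = (u.drop j0).take v.length := by
      rw [e1]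
      exact take_append_of_le_length (by simp; omega)
    rw [e2] at h5
    have h6 : (u.drop j0).take v.length <:+: u :=
      (take_prefix _ _).isInfix.trans (drop_suffix _ _).isInfix
    rwa [h5] at h6
  -- the border-length function
  set f : List α → ℕ := fun v =>
    sInf {k | 0 < k ∧ k < v.length ∧ v.take k <:+ v ∧ occCount (v.take k) v = 2} with hf
  have hfspec : ∀ v ∈ S,
      0 < f v ∧ f v < v.length ∧ v.take (f v) <:+ v ∧ occCount (v.take (f v)) v = 2 := by
    intro v hv
    obtain ⟨hvs, hvc, _⟩ := hmem v hv
    have h2 : 2 ≤ v.length := by have := hlen v hv; omega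
    rcases hvc with h | ⟨k, hk, hks, hk2⟩
    · omega
    · simp only [Finset.mem_Ioo] at hk
      have hne : {k | 0 < k ∧ k < v.length ∧ v.take k <:+ v ∧
          occCount (v.take k) v = 2}.Nonempty := ⟨k, hk.1, hk.2, hks, hk2⟩
      exact Nat.sInf_mem hne
  -- range of f
  have hrange : ∀ v ∈ S, f v ∈ Finset.Ioc z.length t.length := by
    intro v hv
    obtain ⟨hvs, _, _⟩ := hmem v hv
    obtain ⟨hk0, hkv, hks, hk2⟩ := hfspec v hv
    set k := f v
    set b := v.take k with hb
    have hbl : b.length = k := by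
      rw [hb, length_take]
      omega
    obtain ⟨i, j, hij, hi, hj⟩ := Stmt4Aux.exists_two_of_occCount hk2.ge
    have hiw := Stmt4Aux.occAt_trans hvs hi
    have hjw := Stmt4Aux.occAt_trans hvs hj
    have h2w : 2 ≤ occCount b w := Stmt4Aux.two_le_occCount (by omega) hiw hjw
    have hbw : b <:+ w := hks.trans hvs
    have hkt : k ≤ t.length := by
      have := htmax b hbw h2w
      omega
    rw [Finset.mem_Ioc]
    refine ⟨?_, hkt⟩
    by_contra hzk
    push_neg at hzk
    have hzw : z <:+ w := hz.trans ht
    have hbz : b <:+ z := Stmt4Aux.suffix_suffix hbw hzw (by omega)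
    obtain ⟨i1, i2, hi12, h1, h2⟩ := Stmt4Aux.exists_two_of_occCount hz2
    have hvt := hlen v hv
    have htv : t <:+ v := Stmt4Aux.suffix_suffix ht hvs hvt.le
    have o1 := Stmt4Aux.occAt_trans htv (Stmt4Aux.occAt_sub hbz h1)
    have o2 := Stmt4Aux.occAt_trans htv (Stmt4Aux.occAt_sub hbz h2)
    have o0 : Stmt4Aux.OccAt b v 0 := by
      refine ⟨by omega, ?_⟩
      rw [drop_zero, hbl, hb]
    have h3 : 3 ≤ occCount b v :=
      Stmt4Aux.three_le_occCount (by omega) (by omega) (by omega) o0 o1 o2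
    omega
  -- injectivity
  have key : ∀ v ∈ S, ∀ v' ∈ S, f v = f v' → v.length < v'.length → False := by
    intro v hv v' hv' hff hlt
    obtain ⟨hvs, _, _⟩ := hmem v hv
    obtain ⟨hvs', _, _⟩ := hmem v' hv'
    obtain ⟨hk0, hkv, hks, hk2⟩ := hfspec v hv
    obtain ⟨hk0', hkv', hks', hk2'⟩ := hfspec v' hv'
    rw [← hff] at hk0' hkv' hks' hk2'
    set k := f v
    have hvv' : v <:+ v' := Stmt4Aux.suffix_suffix hvs hvs' hlt.le
    have hbv' : v.take k <:+ v' := hks.trans hvv'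
    have hbeq : v'.take k = v.take k := by
      refine (Stmt4Aux.suffix_suffix hks' hbv' ?_).eq_of_length ?_
      · rw [length_take, length_take]; omega
      · rw [length_take, length_take]; omega
    rw [hbeq] at hk2' hks'
    set b := v.take k with hb
    have hbl : b.length = k := by
      rw [hb, length_take]; omega
    have o0 : Stmt4Aux.OccAt b v' 0 := by
      refine ⟨by omega, ?_⟩
      rw [drop_zero, hbl, hb, hbeq]
    have oin : Stmt4Aux.OccAt b v 0 := by
      refine ⟨by omega, ?_⟩
      rw [drop_zero, hbl, hb]
    have oMid := Stmt4Aux.occAt_trans hvv' oin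
    have oEnd : Stmt4Aux.OccAt b v' (v'.length - b.length) := Stmt4Aux.occAt_suffix hks'
    have h3 : 3 ≤ occCount b v' :=
      Stmt4Aux.three_le_occCount (by omega) (by omega) (by omega) o0 oMid oEnd
    omega
  have hinj : Set.InjOn f ↑S := by
    intro x hx y hy hxy
    by_contra hne
    have hxs := (hmem x hx).1
    have hys := (hmem y hy).1
    rcases lt_trichotomy x.length y.length with h | h | h
    · exact key x hx y hy hxy h
    · exact hne ((Stmt4Aux.suffix_suffix hxs hys h.le).eq_of_length h)
    · exact key y hy x hx hxy.symm h
  calc S.card ≤ (Finset.Ioc z.length t.length).card :=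
        Finset.card_le_card_of_injOn f hrange hinj
    _ = t.length - z.length := Nat.card_Ioc _ _
end

section
/- Let w = v^α be a finite word of exponent α ≥ 3 with primitive root v. Then for any cyclic shift v' of v, the word v'^α contains exactly the same number of distinct closed factors as w. -/
open List

variable {α : Type*}

/-- The fractional power of `v` of total length `n` (prefix of length `n` of `v^ω`). -/
def fracPow (v : List α) (n : ℕ) : List α := ((List.replicate n v).flatten).take n

def NoSmallPer (W : ℕ → α) (p : ℕ) : Prop :=
  ∀ d i, 0 < d → d < p → ¬ (∀ x, i ≤ x → W (x + d) = W x)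

lemma period_mul {W : ℕ → α} {q : ℕ} (hq : ∀ a, W (a + q) = W a) :
    ∀ (k a : ℕ), W (a + k * q) = W a := by
  intro k
  induction k with
  | zero => simp
  | succ k ih =>
    intro a
    have e : a + (k + 1) * q = a + k * q + q := by ring
    rw [e, hq, ih]

lemma period_gcd {W : ℕ → α} : ∀ (a b : ℕ), (∀ x, W (x + a) = W x) →
    (∀ x, W (x + b) = W x) → ∀ x, W (x + Nat.gcd a b) = W x := by
  intro a b
  induction a, b using Nat.gcd.induction with
  | H0 n => intro _ hb x; rw [Nat.gcd_zero_left]; exact hb x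
  | H1 m n hm ih =>
    intro ha hb x
    rw [Nat.gcd_rec]
    refine ih ?_ ha x
    intro y
    have hmul := period_mul ha
    have e : y + n % m + (n / m) * m = y + n := by
      have := Nat.mod_add_div' n m
      omega
    calc W (y + n % m) = W (y + n % m + (n / m) * m) := (hmul _ _).symm
      _ = W (y + n) := by rw [e]
      _ = W y := hb y

@[simp] lemma factorAt_length (W : ℕ → α) (i m : ℕ) : (factorAt W i m).length = m := by
  simp [factorAt]

lemma factorAt_getElem (W : ℕ → α) (i m t : ℕ) (h : t < (factorAt W i m).length) :
    (factorAt W i m)[t] = W (i + t) := by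
  simp [factorAt]

lemma factorAt_congr {W : ℕ → α} {p : ℕ} (hmod : ∀ a, W a = W (a % p))
    {a b : ℕ} (hab : a % p = b % p) (m : ℕ) : factorAt W a m = factorAt W b m := by
  apply List.ext_getElem (by simp)
  intro t h1 h2
  rw [factorAt_getElem, factorAt_getElem, hmod (a + t), hmod (b + t),
    Nat.add_mod a, Nat.add_mod b, hab]

lemma factorAt_take (W : ℕ → α) (i m k : ℕ) (h : k ≤ m) :
    (factorAt W i m).take k = factorAt W i k := by
  apply List.ext_getElem (by simp; omega)
  intro t h1 h2
  rw [List.getElem_take, factorAt_getElem, factorAt_getElem]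

lemma factorAt_drop (W : ℕ → α) (i m j : ℕ) :
    (factorAt W i m).drop j = factorAt W (i + j) (m - j) := by
  apply List.ext_getElem (by simp)
  intro t h1 h2
  rw [List.getElem_drop, factorAt_getElem, factorAt_getElem, Nat.add_assoc]

lemma mapRange_drop_take (W : ℕ → α) {n i m : ℕ} (h : i + m ≤ n) :
    (((range n).map W).drop i).take m = factorAt W i m := by
  apply List.ext_getElem (by simp; omega)
  intro t h1 h2
  rw [List.getElem_take, List.getElem_drop, List.getElem_map, List.getElem_range,
    factorAt_getElem]

lemma infix_mapRange {W : ℕ → α} {n : ℕ} {u : List α} :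
    u <:+: (range n).map W ↔ ∃ i, i + u.length ≤ n ∧ u = factorAt W i u.length := by
  constructor
  · rintro ⟨a, b, h⟩
    have hlen : a.length + u.length ≤ n := by
      have := congrArg List.length h
      simp at this; omega
    refine ⟨a.length, hlen, ?_⟩
    rw [← mapRange_drop_take W hlen, ← h, List.append_assoc, List.drop_left, List.take_left]
  · rintro ⟨i, hle, hu⟩
    have h2 : u = (((range n).map W).drop i).take u.length := by
      rw [mapRange_drop_take W hle, ← hu]
    rw [h2]
    exact ((List.take_prefix _ _).isInfix).trans ((List.drop_suffix _ _).isInfix)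

lemma mem_closedFactors [DecidableEq α] {u w : List α} :
    u ∈ closedFactors w ↔ u <:+: w ∧ ClosedWord u := by
  rw [closedFactors, Finset.mem_filter, and_congr_left_iff]
  intro _
  rw [List.mem_toFinset, List.mem_flatMap]
  constructor
  · rintro ⟨t, ht, hu⟩
    rw [List.mem_inits] at ht
    rw [List.mem_tails] at hu
    exact hu.isInfix.trans ht.isInfix
  · rintro ⟨a, b, h⟩
    exact ⟨a ++ u, by rw [List.mem_inits]; exact ⟨b, h⟩,
      by rw [List.mem_tails]; exact ⟨a, rfl⟩⟩

lemma aux_no_two_occ {W : ℕ → α} {p : ℕ} (hp0 : 0 < p) (hmod : ∀ a, W a = W (a % p))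
    (hns : NoSmallPer W p) {a d m : ℕ} (hd : 0 < d) (hdp : d < p) (hm : p ≤ m)
    (heq : factorAt W a m = factorAt W (a + d) m) : False := by
  apply hns d a hd hdp
  intro x hx
  have hWp : ∀ y, W (y + p) = W y := fun y => by
    rw [hmod (y + p), hmod y, Nat.add_mod_right]
  have hmul := period_mul hWp
  obtain ⟨q, r, hrp, hxeq⟩ : ∃ q r, r < p ∧ x = a + q * p + r := by
    refine ⟨(x - a) / p, (x - a) % p, Nat.mod_lt _ hp0, ?_⟩
    rw [Nat.mul_comm ((x - a) / p) p]
    have := Nat.div_add_mod (x - a) p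
    omega
  have hrm : r < m := lt_of_lt_of_le hrp hm
  have h1 : W (a + r) = W (a + d + r) := by
    have h' : (factorAt W a m)[r]'(by simp [hrm]) = (factorAt W (a + d) m)[r]'(by simp [hrm]) :=
      List.getElem_of_eq heq _
    rwa [factorAt_getElem, factorAt_getElem] at h'
  have e1 : x + d = a + d + r + q * p := by omega
  calc W (x + d) = W (a + d + r + q * p) := by rw [e1]
    _ = W (a + d + r) := hmul q _
    _ = W (a + r) := h1.symm
    _ = W (a + r + q * p) := (hmul q _).symm
    _ = W x := by congr 1; omega

lemma pos_unique {W : ℕ → α} {p : ℕ} (hp0 : 0 < p) (hmod : ∀ a, W a = W (a % p))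
    (hns : NoSmallPer W p) {i j m : ℕ} (hm : p ≤ m)
    (heq : factorAt W i m = factorAt W j m) : i % p = j % p := by
  by_contra hne
  have h1 : factorAt W (i % p) m = factorAt W (j % p) m := by
    rw [← factorAt_congr hmod (Nat.mod_mod_of_dvd i dvd_rfl) m,
      ← factorAt_congr hmod (Nat.mod_mod_of_dvd j dvd_rfl) m] at heq
    exact heq
  rcases Nat.lt_or_ge (i % p) (j % p) with hlt | hge
  · have hd : 0 < j % p - i % p := by omega
    have hdp : j % p - i % p < p := by
      have := Nat.mod_lt j hp0; omega
    apply aux_no_two_occ hp0 hmod hns hd hdp hm (a := i % p)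
    rw [show i % p + (j % p - i % p) = j % p from by omega]
    exact h1
  · have hlt2 : j % p < i % p := by omega
    have hd : 0 < i % p - j % p := by omega
    have hdp : i % p - j % p < p := by
      have := Nat.mod_lt i hp0; omega
    apply aux_no_two_occ hp0 hmod hns hd hdp hm (a := j % p)
    rw [show j % p + (i % p - j % p) = i % p from by omega]
    exact h1.symm

lemma closed_factorAt [DecidableEq α] {W : ℕ → α} {p : ℕ} (hp0 : 0 < p)
    (hmod : ∀ a, W a = W (a % p)) (hns : NoSmallPer W p) {i m : ℕ} (hm : 2 * p ≤ m) :
    ClosedWord (factorAt W i m) := by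
  right
  refine ⟨m - p, by simp [Finset.mem_Ioo]; omega, ?_, ?_⟩
  · rw [factorAt_take W i m (m - p) (by omega)]
    have h2 : factorAt W i (m - p) = (factorAt W i m).drop p := by
      rw [factorAt_drop]
      exact (factorAt_congr hmod (Nat.add_mod_right i p) _).symm
    rw [h2]
    exact List.drop_suffix _ _
  · rw [factorAt_take W i m (m - p) (by omega)]
    simp only [occCount, factorAt_length]
    rw [Finset.card_eq_two]
    refine ⟨0, p, by omega, ?_⟩
    ext j
    simp only [Finset.mem_filter, Finset.mem_range, Finset.mem_insert, Finset.mem_singleton]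
    constructor
    · rintro ⟨hj1, hj2, hj3⟩
      rw [factorAt_drop, factorAt_take _ _ _ _ (by omega)] at hj3
      have huniq := pos_unique hp0 hmod hns (show p ≤ m - p by omega) hj3
      have hdvd : p ∣ j := by
        have hme : i ≡ i + j [MOD p] := huniq.symm
        have := (Nat.modEq_iff_dvd' (Nat.le_add_right i j)).mp hme
        simpa using this
      rcases hdvd with ⟨c, rfl⟩
      rcases Nat.eq_zero_or_pos c with rfl | hc
      · left; simp
      · right
        have h1 : p ≤ p * c := Nat.le_mul_of_pos_right p hc
        omega
    · rintro (rfl | hjp)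
      · refine ⟨by omega, by omega, ?_⟩
        rw [factorAt_drop, factorAt_take _ _ _ _ (by omega)]
        norm_num
      · refine ⟨by omega, by omega, ?_⟩
        rw [hjp, factorAt_drop, factorAt_take _ _ _ _ (by omega)]
        exact factorAt_congr hmod (Nat.add_mod_right i p) _

lemma shift_mod (p s i : ℕ) (hp0 : 0 < p) :
    ((i + (p - s % p)) % p + s) % p = i % p := by
  rw [Nat.mod_add_mod]
  have h3 : s % p < p := Nat.mod_lt s hp0
  have h4 : s % p + p * (s / p) = s := Nat.mod_add_div s p
  have e : i + (p - s % p) + s = i + p * (1 + s / p) := by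
    have e2 : p * (1 + s / p) = p + p * (s / p) := by ring
    omega
  rw [e, Nat.add_mul_mod_self_left]

lemma short_infix_transfer {W₁ W₂ : ℕ → α} {p s n : ℕ} (hp0 : 0 < p)
    (h1 : ∀ a, W₁ a = W₁ (a % p))
    (hrel : ∀ a, W₂ a = W₁ (a + s)) {u : List α}
    (hu : u <:+: (range n).map W₁) (hlen : u.length + p ≤ n) :
    u <:+: (range n).map W₂ := by
  rw [infix_mapRange] at hu ⊢
  obtain ⟨i, hi, hfac⟩ := hu
  set j := (i + (p - s % p)) % p with hjdef
  have hjp : j < p := Nat.mod_lt _ hp0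
  refine ⟨j, by omega, hfac.trans ?_⟩
  apply List.ext_getElem (by simp)
  intro t h1' h2'
  rw [factorAt_getElem, factorAt_getElem, hrel (j + t), h1 (i + t), h1 (j + t + s)]
  congr 1
  have hM : (j + s) ≡ i [MOD p] := by
    have := shift_mod p s i hp0
    simpa [Nat.ModEq, hjdef] using this
  have h5 := hM.add_right t
  rw [show j + t + s = j + s + t from by omega]
  exact h5.symm

lemma card_long [DecidableEq α] (W : ℕ → α) (p n : ℕ) (hp0 : 0 < p)
    (hmod : ∀ a, W a = W (a % p)) (hns : NoSmallPer W p) (hn : 3 * p ≤ n) :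
    ((closedFactors ((range n).map W)).filter (fun u => ¬ (u.length + p ≤ n))).card
      = (((Finset.range (n + 1)) ×ˢ (Finset.range (n + 1))).filter
          (fun q : ℕ × ℕ => q.1 + q.2 ≤ n ∧ n < q.2 + p)).card := by
  set S := ((Finset.range (n + 1)) ×ˢ (Finset.range (n + 1))).filter
      (fun q : ℕ × ℕ => q.1 + q.2 ≤ n ∧ n < q.2 + p) with hS
  have himg : (closedFactors ((range n).map W)).filter (fun u => ¬ (u.length + p ≤ n))
      = S.image (fun q => factorAt W q.1 q.2) := by
    ext u
    simp only [Finset.mem_filter, mem_closedFactors, Finset.mem_image, hS,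
      Finset.mem_product, Finset.mem_range]
    constructor
    · rintro ⟨⟨hinf, hcl⟩, hlong⟩
      rw [infix_mapRange] at hinf
      obtain ⟨i, hi, hfac⟩ := hinf
      exact ⟨(i, u.length), ⟨⟨by omega, by omega⟩, by omega, by omega⟩, hfac.symm⟩
    · rintro ⟨⟨i, m⟩, ⟨⟨hi1, hm1⟩, him, hlong⟩, rfl⟩
      have h2p : 2 * p ≤ m := by omega
      refine ⟨⟨?_, closed_factorAt hp0 hmod hns h2p⟩, by simp; omega⟩
      rw [infix_mapRange]
      exact ⟨i, by simp; omega, by rw [factorAt_length]⟩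
  rw [himg]
  apply Finset.card_image_of_injOn
  intro q hq q' hq' heq
  dsimp only at heq
  simp only [hS, Finset.mem_coe, Finset.mem_filter, Finset.mem_product, Finset.mem_range] at hq hq'
  obtain ⟨⟨_, _⟩, hq2, hq3⟩ := hq
  obtain ⟨⟨_, _⟩, hq2', hq3'⟩ := hq'
  have hm : q.2 = q'.2 := by
    have := congrArg List.length heq
    simpa using this
  rw [hm] at heq
  have hmod2 : q.1 % p = q'.1 % p := pos_unique hp0 hmod hns (by omega) heq
  have h1 : q.1 = q'.1 := by
    rwa [Nat.mod_eq_of_lt (by omega), Nat.mod_eq_of_lt (by omega)] at hmod2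
  exact Prod.ext h1 hm

theorem clCount_eq_of_shift [DecidableEq α] {W₁ W₂ : ℕ → α} {p s₁ s₂ n : ℕ} (hp0 : 0 < p)
    (h1 : ∀ a, W₁ a = W₁ (a % p)) (h2 : ∀ a, W₂ a = W₂ (a % p))
    (hns1 : NoSmallPer W₁ p) (hns2 : NoSmallPer W₂ p)
    (hrel1 : ∀ a, W₂ a = W₁ (a + s₁)) (hrel2 : ∀ a, W₁ a = W₂ (a + s₂))
    (hn : 3 * p ≤ n) :
    clCount ((range n).map W₂) = clCount ((range n).map W₁) := by
  classical
  have hA : (closedFactors ((range n).map W₂)).filter (fun u => u.length + p ≤ n)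
      = (closedFactors ((range n).map W₁)).filter (fun u => u.length + p ≤ n) := by
    ext u
    simp only [Finset.mem_filter, mem_closedFactors]
    constructor
    · rintro ⟨⟨hinf, hcl⟩, hshort⟩
      exact ⟨⟨short_infix_transfer hp0 h2 hrel2 hinf hshort, hcl⟩, hshort⟩
    · rintro ⟨⟨hinf, hcl⟩, hshort⟩
      exact ⟨⟨short_infix_transfer hp0 h1 hrel1 hinf hshort, hcl⟩, hshort⟩
  have hB := (card_long W₂ p n hp0 h2 hns2 hn).trans (card_long W₁ p n hp0 h1 hns1 hn).symm
  rw [clCount, clCount,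
    ← Finset.card_filter_add_card_filter_not (s := closedFactors ((range n).map W₂))
      (fun u : List α => u.length + p ≤ n),
    ← Finset.card_filter_add_card_filter_not (s := closedFactors ((range n).map W₁))
      (fun u : List α => u.length + p ≤ n), hA, hB]

lemma flatten_replicate_eq (u : List α) (Wu : ℕ → α)
    (hW : ∀ j (h : j < u.length), Wu j = u[j])
    (hWp : ∀ a, Wu (a + u.length) = Wu a) (k : ℕ) :
    (List.replicate k u).flatten = (range (k * u.length)).map Wu := by
  induction k with
  | zero => simp
  | succ k ih =>
    rw [List.replicate_succ, List.flatten_cons, ih]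
    have e : (k + 1) * u.length = u.length + k * u.length := by ring
    rw [e, List.range_add, List.map_append, List.map_map]
    congr 1
    · apply List.ext_getElem (by simp)
      intro t h1 h2
      simp only [List.getElem_map, List.getElem_range]
      exact (hW t (by simpa using h1)).symm
    · apply List.map_congr_left
      intro j hj
      show Wu j = Wu (u.length + j)
      rw [Nat.add_comm u.length j]
      exact (hWp j).symm

lemma fracPow_eq (v : List α) (hv : 0 < v.length) (W : ℕ → α)
    (hW : ∀ j (h : j < v.length), W j = v[j]) (hWp : ∀ a, W (a + v.length) = W a) (n : ℕ) :
    fracPow v n = (range n).map W := by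
  rw [fracPow, flatten_replicate_eq v W hW hWp n]
  apply List.ext_getElem
  · have : n ≤ n * v.length := Nat.le_mul_of_pos_right n hv
    simp; omega
  · intro t h1 h2
    rw [List.getElem_take, List.getElem_map, List.getElem_map, List.getElem_range,
      List.getElem_range]

lemma noSmallPer_of_primitive (v : List α) (hp : Primitive v) (W : ℕ → α)
    (hW : ∀ j (h : j < v.length), W j = v[j])
    (hmod : ∀ a, W a = W (a % v.length)) : NoSmallPer W v.length := by
  set p := v.length with hpdef
  have hp0 : 0 < p := List.length_pos_iff.mpr hp.1
  intro d i hd hdp hper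
  have hWp : ∀ a, W (a + p) = W a := fun a => by
    rw [hmod (a + p), hmod a, Nat.add_mod_right]
  have hmul := period_mul hWp
  have hglob : ∀ x, W (x + d) = W x := by
    intro x
    have hip : i ≤ i * p := Nat.le_mul_of_pos_right i hp0
    calc W (x + d) = W (x + d + i * p) := (hmul i _).symm
      _ = W (x + i * p + d) := by congr 1; omega
      _ = W (x + i * p) := hper _ (by omega)
      _ = W x := hmul i x
  have hg := period_gcd p d hWp hglob
  set g := Nat.gcd p d with hgdef
  have hgdvd : g ∣ p := Nat.gcd_dvd_left p d
  have hg0 : 0 < g := Nat.gcd_pos_of_pos_left d hp0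
  have hgd : g ≤ d := Nat.le_of_dvd hd (Nat.gcd_dvd_right p d)
  have hglt : g < p := lt_of_le_of_lt hgd hdp
  have hgmul := period_mul hg
  have hlt : (v.take g).length = g := by simp [hpdef.symm]; omega
  have hk2 : 2 ≤ p / g := by
    have hdm : p / g * g = p := Nat.div_mul_cancel hgdvd
    by_contra hcon
    push_neg at hcon
    interval_cases h : p / g <;> omega
  apply hp.2 (v.take g) (p / g) hk2
  have hveq : (List.replicate (p / g) (v.take g)).flatten = (range p).map W := by
    rw [flatten_replicate_eq (v.take g) W ?_ ?_]
    · rw [hlt, Nat.div_mul_cancel hgdvd]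
    · intro j hj
      rw [hlt] at hj
      rw [List.getElem_take]
      exact hW j (by omega)
    · intro a
      rw [hlt]
      exact hg a
  rw [hveq]
  apply List.ext_getElem (by simp [hpdef.symm])
  intro t h1 h2
  simp only [List.getElem_map, List.getElem_range]
  exact (hW t (by simpa [hpdef.symm] using h1)).symm


/-- if `w = v^α` with `v` primitive and exponent α ≥ 3, then for any
cyclic shift `v' = y ++ x` of `v = x ++ y`, the word `v'^α` has exactly the same
number of distinct closed factors as `w`. -/
theorem stmt7 [DecidableEq α] (v x y : List α) (hv : v = x ++ y) (hp : Primitive v)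
    (n : ℕ) (h : 3 * v.length ≤ n) :
    clCount (fracPow (y ++ x) n) = clCount (fracPow v n) := by
  classical
  have hp0 : 0 < v.length := List.length_pos_iff.mpr hp.1
  set p := v.length with hpdef
  set s := x.length with hsdef
  set W₁ : ℕ → α := fun j => v[j % p]'(Nat.mod_lt _ hp0) with hW₁def
  set W₂ : ℕ → α := fun a => W₁ (a + s) with hW₂def
  have hslep : s ≤ p := by rw [hpdef, hv]; simp [hsdef]
  have hlen2 : (y ++ x).length = p := by rw [hpdef, hv]; simp [Nat.add_comm]
  have hW1 : ∀ j (hj : j < p), W₁ j = v[j] := by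
    intro j hj
    simp only [hW₁def, Nat.mod_eq_of_lt hj]
  have hmod1 : ∀ a, W₁ a = W₁ (a % p) := by
    intro a
    simp only [hW₁def, Nat.mod_mod_of_dvd a dvd_rfl]
  have hWp1 : ∀ a, W₁ (a + p) = W₁ a := by
    intro a
    simp only [hW₁def, Nat.add_mod_right]
  have hns1 : NoSmallPer W₁ p := noSmallPer_of_primitive v hp W₁ hW1 hmod1
  have hrel1 : ∀ a, W₂ a = W₁ (a + s) := fun a => rfl
  have hmod2 : ∀ a, W₂ a = W₂ (a % p) := by
    intro a
    rw [hrel1 a, hrel1 (a % p), hmod1 (a + s), hmod1 (a % p + s)]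
    congr 1
    rw [Nat.add_mod a s, Nat.add_mod (a % p) s, Nat.mod_mod_of_dvd a dvd_rfl]
  have hrel2 : ∀ a, W₁ a = W₂ (a + (p - s % p)) := by
    intro a
    rw [hrel1 (a + (p - s % p)), hmod1 a, hmod1 (a + (p - s % p) + s)]
    congr 1
    rw [← Nat.mod_add_mod]
    exact (shift_mod p s a hp0).symm
  have hns2 : NoSmallPer W₂ p := by
    intro d i hd hdp hper
    apply hns1 d (i + s) hd hdp
    intro z hz
    have h2 := hper (z - s) (by omega)
    rw [hrel1, hrel1, show z - s + d + s = z + d from by omega,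
      show z - s + s = z from by omega] at h2
    exact h2
  have hW2 : ∀ j (hj : j < (y ++ x).length), W₂ j = (y ++ x)[j] := by
    intro j hj
    rw [hlen2] at hj
    have hxy : x.length + y.length = p := by rw [hpdef, hv]; simp [hsdef]
    rcases Nat.lt_or_ge j y.length with hjy | hjy
    · have e1 : (j + s) % p = j + s := Nat.mod_eq_of_lt (by omega)
      have e2 : j + s < v.length := by omega
      calc W₂ j = v[(j + s) % p]'(Nat.mod_lt _ hp0) := rfl
        _ = v[j + s]'e2 := by simp only [e1]
        _ = (x ++ y)[j + s]'(by rw [← hv]; exact e2) := List.getElem_of_eq hv e2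
        _ = y[j + s - x.length]'(by omega) := List.getElem_append_right (by omega)
        _ = y[j]'hjy := by simp only [show j + s - x.length = j from by omega]
        _ = (y ++ x)[j]'(by rw [hlen2]; omega) := (List.getElem_append_left hjy).symm
    · have e0 : (j + s) % p = j - y.length := by
        have : j + s - p < p := by omega
        rw [Nat.mod_eq_sub_mod (by omega), Nat.mod_eq_of_lt this]
        omega
      have e2 : j - y.length < v.length := by omega
      calc W₂ j = v[(j + s) % p]'(Nat.mod_lt _ hp0) := rfl
        _ = v[j - y.length]'e2 := by simp only [e0]
        _ = (x ++ y)[j - y.length]'(by rw [← hv]; exact e2) := List.getElem_of_eq hv e2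
        _ = x[j - y.length]'(by omega) := List.getElem_append_left (by omega)
        _ = (y ++ x)[j]'(by rw [hlen2]; omega) := by
              rw [List.getElem_append_right (by omega)]
  have hWp2 : ∀ a, W₂ (a + (y ++ x).length) = W₂ a := by
    intro a
    rw [hlen2, hrel1, hrel1, show a + p + s = a + s + p from by omega, hWp1]
  have hy0 : 0 < (y ++ x).length := by omega
  rw [fracPow_eq v hp0 W₁ hW1 hWp1 n, fracPow_eq (y ++ x) hy0 W₂ hW2 hWp2 n]
  exact clCount_eq_of_shift hp0 hmod1 hmod2 hns1 hns2 hrel1 hrel2 h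
end

section
/- The word a^n b a^n b a^n over the alphabet {a,b} contains Θ(n²) distinct closed factors; more precisely, the number of distinct closed factors of a^n b a^n b a^n is at least n²/2 (for n sufficiently large). -/
open List

variable {α : Type*}

def Wd (a b : α) (n i j : ℕ) : List α :=
  List.replicate i a ++ [b] ++ List.replicate n a ++ [b] ++ List.replicate j a

def Pd (a b : α) (i j : ℕ) : List α :=
  List.replicate i a ++ [b] ++ List.replicate j a

lemma Wd_length (a b : α) (n i j : ℕ) : (Wd a b n i j).length = i + n + j + 2 := by
  simp [Wd]; omega

lemma Pd_length (a b : α) (i j : ℕ) : (Pd a b i j).length = i + j + 1 := by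
  simp [Pd]; omega

lemma getElem_Wd (a b : α) (hab : a ≠ b) (n i j : ℕ) (idx : ℕ)
    (h : idx < (Wd a b n i j).length) :
    (Wd a b n i j)[idx] = b ↔ (idx = i ∨ idx = i + n + 1) := by
  rw [Wd_length] at h
  simp only [Wd, List.getElem_append, List.length_append, List.length_replicate,
    List.length_cons, List.length_nil, List.getElem_replicate]
  split_ifs <;> simp_all [List.getElem_singleton] <;> omega

lemma getElem_Pd (a b : α) (i j : ℕ) (h : i < (Pd a b i j).length) :
    (Pd a b i j)[i] = b := by
  simp only [Pd, List.getElem_append, List.length_append, List.length_replicate,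
    List.length_cons, List.length_nil, List.getElem_replicate]
  split_ifs <;> simp_all <;> omega

lemma decomp1 (a b : α) (n i j : ℕ) (hi : i ≤ n) :
    Wd a b n i j = (List.replicate i a ++ [b] ++ List.replicate (n - i) a) ++ Pd a b i j := by
  have h : List.replicate n a = List.replicate (n - i) a ++ List.replicate i a := by
    rw [← List.replicate_add]; congr 1; omega
  rw [Wd, Pd, h]
  simp only [List.append_assoc, List.cons_append, List.singleton_append, List.nil_append]

lemma decomp2 (a b : α) (n i j : ℕ) (hj : j ≤ n) :
    Wd a b n i j = Pd a b i j ++ (List.replicate (n - j) a ++ [b] ++ List.replicate j a) := by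
  have h : List.replicate n a = List.replicate j a ++ List.replicate (n - j) a := by
    rw [← List.replicate_add]; congr 1; omega
  rw [Wd, Pd, h]
  simp only [List.append_assoc, List.cons_append, List.singleton_append, List.nil_append]

lemma Pd_prefix (a b : α) (n i j : ℕ) (hj : j ≤ n) : Pd a b i j <+: Wd a b n i j :=
  ⟨_, (decomp2 a b n i j hj).symm⟩

lemma Pd_suffix (a b : α) (n i j : ℕ) (hi : i ≤ n) : Pd a b i j <:+ Wd a b n i j :=
  ⟨_, (decomp1 a b n i j hi).symm⟩

lemma drop_Wd (a b : α) (n i j : ℕ) (hi : i ≤ n) :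
    (Wd a b n i j).drop (n + 1) = Pd a b i j := by
  rw [decomp1 a b n i j hi,
    show n + 1 = (List.replicate i a ++ [b] ++ List.replicate (n - i) a).length by
      simp; omega, List.drop_left]

lemma occ_eq [DecidableEq α] (a b : α) (hab : a ≠ b) (n i j : ℕ) (hi : i ≤ n) (hj : j ≤ n) :
    occCount (Pd a b i j) (Wd a b n i j) = 2 := by
  have hset : ((Finset.range ((Wd a b n i j).length + 1)).filter
      (fun s => s + (Pd a b i j).length ≤ (Wd a b n i j).length ∧
        ((Wd a b n i j).drop s).take (Pd a b i j).length = Pd a b i j))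
      = {0, n + 1} := by
    ext s
    simp only [Finset.mem_filter, Finset.mem_range, Finset.mem_insert, Finset.mem_singleton]
    constructor
    · rintro ⟨hs, hle, heq⟩
      have hil : i < (Pd a b i j).length := by rw [Pd_length]; omega
      have h1 : i < (((Wd a b n i j).drop s).take (Pd a b i j).length).length := by
        rw [heq]; exact hil
      have h2 : s + i < (Wd a b n i j).length := by
        rw [Wd_length] at *; rw [Pd_length] at hle; omega
      have hb : (Wd a b n i j)[s + i] = b := by
        have h3 := List.getElem_of_eq heq h1
        rw [List.getElem_take, List.getElem_drop] at h3
        rw [h3]; exact getElem_Pd a b i j hil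
      rcases (getElem_Wd a b hab n i j (s + i) h2).mp hb with h | h <;> omega
    · rintro (rfl | rfl)
      · refine ⟨by omega, ?_, ?_⟩
        · rw [Wd_length, Pd_length]; omega
        · rw [List.drop_zero, ← List.prefix_iff_eq_take.mp (Pd_prefix a b n i j hj)]
      · refine ⟨by rw [Wd_length]; omega, ?_, ?_⟩
        · rw [Wd_length, Pd_length]; omega
        · rw [drop_Wd a b n i j hi, List.take_length]
  rw [occCount, hset]
  rw [Finset.card_insert_of_notMem (by simp), Finset.card_singleton]

lemma take_Wd (a b : α) (n i j : ℕ) (hj : j ≤ n) :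
    (Wd a b n i j).take (i + j + 1) = Pd a b i j := by
  rw [← Pd_length a b i j, ← List.prefix_iff_eq_take.mp (Pd_prefix a b n i j hj)]

lemma closed_Wd [DecidableEq α] (a b : α) (hab : a ≠ b) (n i j : ℕ) (hi : i ≤ n) (hj : j ≤ n) :
    ClosedWord (Wd a b n i j) := by
  right
  refine ⟨i + j + 1, ?_, ?_, ?_⟩
  · rw [Finset.mem_Ioo, Wd_length]; omega
  · rw [take_Wd a b n i j hj]; exact Pd_suffix a b n i j hi
  · rw [take_Wd a b n i j hj]; exact occ_eq a b hab n i j hi hj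

lemma Wd_factor [DecidableEq α] (a b : α) (n i j : ℕ) (hi : i ≤ n) (hj : j ≤ n) :
    Wd a b n i j ∈ ((List.replicate n a ++ [b] ++ List.replicate n a ++ [b]
      ++ List.replicate n a).inits.flatMap List.tails).toFinset := by
  have h1 : List.replicate (n - i) a ++ List.replicate i a = List.replicate n a := by
    rw [← List.replicate_add]; congr 1; omega
  have h2 : ∀ X : List α, X ++ List.replicate j a ++ List.replicate (n - j) a
      = X ++ List.replicate n a := by
    intro X
    rw [List.append_assoc, ← List.replicate_add]
    congr 2; omega
  have heq : List.replicate (n - i) a ++ Wd a b n i j ++ List.replicate (n - j) a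
      = List.replicate n a ++ [b] ++ List.replicate n a ++ [b] ++ List.replicate n a := by
    conv_lhs => rw [Wd]
    simp only [← List.append_assoc]
    rw [← h1] -- makes RHS match? no-op check
    rw [h2]
    rw [h1]
  rw [List.mem_toFinset, List.mem_flatMap]
  refine ⟨List.replicate (n - i) a ++ Wd a b n i j, ?_, ?_⟩
  · rw [List.mem_inits]
    exact ⟨List.replicate (n - j) a, heq⟩
  · rw [List.mem_tails]
    exact ⟨_, rfl⟩

lemma Wd_inj (a b : α) (hab : a ≠ b) (n i j i' j' : ℕ) (hi : i ≤ n) (hj : j ≤ n)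
    (hi' : i' ≤ n) (hj' : j' ≤ n) (heq : Wd a b n i j = Wd a b n i' j') :
    i = i' ∧ j = j' := by
  have hlen : i + n + j + 2 = i' + n + j' + 2 := by
    rw [← Wd_length a b n i j, ← Wd_length a b n i' j', heq]
  have h1 : i < (Wd a b n i j).length := by rw [Wd_length]; omega
  have h1' : i' < (Wd a b n i j).length := by rw [Wd_length]; omega
  have hb : (Wd a b n i j)[i] = b := (getElem_Wd a b hab n i j i h1).mpr (Or.inl rfl)
  have h2 : i < (Wd a b n i' j').length := by rw [Wd_length]; omega
  have h2' : i' < (Wd a b n i' j').length := by rw [Wd_length]; omega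
  have e1 : (Wd a b n i' j')[i]'h2 = b :=
    (List.getElem_of_eq heq h1).symm.trans hb
  have e2 : (Wd a b n i j)[i']'h1' = b :=
    (List.getElem_of_eq heq h1').trans ((getElem_Wd a b hab n i' j' i' h2').mpr (Or.inl rfl))
  have c1 := (getElem_Wd a b hab n i' j' i h2).mp e1
  have c2 := (getElem_Wd a b hab n i j i' h1').mp e2
  constructor <;> omega

/-- the word aⁿbaⁿbaⁿ has at least n²/2 distinct closed factors for
all sufficiently large n. -/
theorem stmt8 [DecidableEq α] (a b : α) (hab : a ≠ b) :
    ∃ N : ℕ, ∀ n ≥ N,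
      n ^ 2 ≤ 2 * clCount (List.replicate n a ++ [b] ++ List.replicate n a ++ [b]
        ++ List.replicate n a) := by
  refine ⟨0, fun n _ => ?_⟩
  have key : (Finset.range (n + 1) ×ˢ Finset.range (n + 1)).card ≤
      clCount (List.replicate n a ++ [b] ++ List.replicate n a ++ [b] ++ List.replicate n a) := by
    apply Finset.card_le_card_of_injOn (fun p => Wd a b n p.1 p.2)
    · rintro ⟨i, j⟩ hp
      simp only [Finset.mem_coe, Finset.mem_product, Finset.mem_range] at hp
      have hi : i ≤ n := by omega
      have hj : j ≤ n := by omega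
      rw [Finset.mem_coe, closedFactors, Finset.mem_filter]
      exact ⟨Wd_factor a b n i j hi hj, closed_Wd a b hab n i j hi hj⟩
    · rintro ⟨i, j⟩ hp ⟨i', j'⟩ hp' heq
      simp only [Finset.coe_product, Set.mem_prod, Finset.mem_coe, Finset.mem_range] at hp hp'
      obtain ⟨h1, h2⟩ := Wd_inj a b hab n i j i' j' (by omega) (by omega) (by omega) (by omega) heq
      simp [h1, h2]
  rw [Finset.card_product, Finset.card_range] at key
  nlinarith [key]
end

section
/- The word a^n a a^n b a^n (equivalently a^{2n+1} b a^n) over {a,b} contains at most C·n distinct closed factors for some absolute constant C (i.e., the count is linear in n). -/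
open List

variable {α : Type*}

set_option linter.unusedSectionVars false

section
variable [DecidableEq α] {a b : α}

lemma dropW (i j p : ℕ) (hp : p ≤ i) :
    (replicate i a ++ b :: replicate j a).drop p
      = replicate (i - p) a ++ b :: replicate j a := by
  rw [drop_append_of_le_length (by simpa using hp), drop_replicate]

lemma dropW2 (i j p : ℕ) (hp : i + 1 ≤ p) :
    (replicate i a ++ b :: replicate j a).drop p
      = replicate (j - (p - (i + 1))) a := by
  have h1 : (replicate i a ++ b :: replicate j a) = (replicate i a ++ [b]) ++ replicate j a := by
    simp
  have h2 : p = (replicate i a ++ [b]).length + (p - (i+1)) := by simp; omega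
  rw [h1, h2, drop_append, drop_replicate]
  congr 1
  simp

lemma takeW (k m : ℕ) (s : List α) (hk : k ≤ m) :
    (replicate m a ++ s).take k = replicate k a := by
  rw [take_append_of_le_length (by simpa using hk), take_replicate, min_eq_left hk]

lemma getbW (i j : ℕ) :
    (replicate i a ++ b :: replicate j a)[i]'(by simp) = b := by
  rw [getElem_append_right (by simp)]
  simp

lemma getaW (i j p : ℕ) (hp : p < i + 1 + j) (hne : p ≠ i) :
    (replicate i a ++ b :: replicate j a)[p]'(by simp; omega) = a := by
  rcases lt_or_gt_of_ne hne with h | h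
  · rw [getElem_append_left (by simpa using h)]
    simp
  · have h1 : ∀ hh : p < ((replicate i a ++ [b]) ++ replicate j a).length,
        ((replicate i a ++ [b]) ++ replicate j a)[p]'hh = a := by
      intro hh
      rw [getElem_append_right (by simp; omega)]
      exact getElem_replicate _
    have h2 : (replicate i a ++ b :: replicate j a) = (replicate i a ++ [b]) ++ replicate j a := by
      simp
    simp only [h2]
    exact h1 _

/-- occurrence inside the first block -/
lemma occA (i j k p : ℕ) (h : p + k ≤ i) :
    ((replicate i a ++ b :: replicate j a).drop p).take k = replicate k a := by
  rw [dropW i j p (by omega), takeW k (i - p) _ (by omega)]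

/-- occurrence inside the last block -/
lemma occB (i j k p : ℕ) (hp : i + 1 ≤ p) (h : p + k ≤ i + 1 + j) :
    ((replicate i a ++ b :: replicate j a).drop p).take k = replicate k a := by
  rw [dropW2 i j p hp, take_replicate, min_eq_left (by omega)]

lemma closed_imp_eq (hab : a ≠ b) (i j : ℕ) (hij : 1 ≤ i + j)
    (h : ClosedWord (replicate i a ++ b :: replicate j a)) : i = j := by
  set w : List α := replicate i a ++ b :: replicate j a with hw
  have hlen : w.length = i + 1 + j := by simp [hw]; omega
  rcases h with h1 | ⟨k, hk, hsuf, hocc⟩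
  · omega
  rw [Finset.mem_Ioo] at hk
  obtain ⟨hk0, hkL⟩ := hk
  rw [hlen] at hkL
  have hlenk : (w.take k).length = k := by simp [hlen]; omega
  have hdropeq : w.take k = w.drop (w.length - k) := by
    rw [suffix_iff_eq_drop] at hsuf
    rwa [hlenk] at hsuf
  -- step 1 : k ≤ i
  have hki : k ≤ i := by
    by_contra hik
    push_neg at hik
    have h1 : (w.take k)[i]'(by rw [hlenk]; exact hik) = b := by
      rw [getElem_take]; exact getbW i j
    have h2 : (w.take k)[i]'(by rw [hlenk]; exact hik) = a := by
      rw [getElem_of_eq hdropeq, getElem_drop]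
      have key : ∀ q (hq : q < w.length), q ≠ i → w[q]'hq = a := by
        intro q hq hqi
        exact getaW i j q (by omega) hqi
      exact key _ _ (by omega)
    rw [h1] at h2
    exact hab h2.symm
  have htk : w.take k = replicate k a := takeW k i _ hki
  -- step 2 : k ≤ j
  have hkj : k ≤ j := by
    by_contra hjk
    push_neg at hjk
    have ht : k - j - 1 < k := by omega
    have h1 : (w.take k)[k - j - 1]'(by rw [hlenk]; exact ht) = a := by
      rw [getElem_of_eq htk]; exact getElem_replicate _
    have h2 : (w.take k)[k - j - 1]'(by rw [hlenk]; exact ht) = b := by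
      rw [getElem_of_eq hdropeq, getElem_drop]
      have key : ∀ q (hq : q < w.length), q = i → w[q]'hq = b := by
        intro q hq hqi
        subst hqi
        exact getbW _ _
      exact key _ _ (by omega)
    rw [h1] at h2
    exact hab h2
  -- step 3 : use occCount = 2
  by_contra hne
  have hcase : k < i ∨ k < j := by omega
  have hocc' : occCount (w.take k) w = 2 := hocc
  rw [htk] at hocc'
  unfold occCount at hocc'
  have hlrep : (replicate k a : List α).length = k := by simp
  set P : ℕ → Prop := fun p => p + (replicate k a : List α).length ≤ w.length ∧
      (w.drop p).take (replicate k a : List α).length = replicate k a with hP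
  have key : ∀ (p1 p2 p3 : ℕ), p1 < p2 → p2 < p3 → p3 + k ≤ w.length →
      (w.drop p1).take k = replicate k a → (w.drop p2).take k = replicate k a →
      (w.drop p3).take k = replicate k a → False := by
    intro p1 p2 p3 h12 h23 h3 o1 o2 o3
    have hsub : ({p1, p2, p3} : Finset ℕ) ⊆
        ((Finset.range (w.length + 1)).filter
          (fun p => p + (replicate k a : List α).length ≤ w.length ∧
            (w.drop p).take (replicate k a : List α).length = replicate k a)) := by
      intro p hp
      simp only [Finset.mem_insert, Finset.mem_singleton] at hp
      rw [Finset.mem_filter, Finset.mem_range, hlrep]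
      rcases hp with rfl | rfl | rfl
      · exact ⟨by omega, by omega, o1⟩
      · exact ⟨by omega, by omega, o2⟩
      · exact ⟨by omega, by omega, o3⟩
    have hcard : ({p1, p2, p3} : Finset ℕ).card = 3 := by
      rw [Finset.card_insert_of_notMem (by simp; omega),
        Finset.card_insert_of_notMem (by simp; omega), Finset.card_singleton]
    have := Finset.card_le_card hsub
    rw [hcard, hocc'] at this
    omega
  rcases hcase with hki' | hkj'
  · exact key 0 1 (i+1) (by omega) (by omega) (by rw [hlen]; omega)
      (occA i j k 0 (by omega)) (occA i j k 1 (by omega))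
      (occB i j k (i+1) (by omega) (by omega))
  · exact key 0 (i+1) (i+2) (by omega) (by omega) (by rw [hlen]; omega)
      (occA i j k 0 (by omega)) (occB i j k (i+1) (by omega) (by omega))
      (occB i j k (i+2) (by omega) (by omega))

end

/-- the word a^{2n+1} b aⁿ has at most C·n distinct closed factors for an
absolute constant C. -/
theorem stmt9 [DecidableEq α] (a b : α) (hab : a ≠ b) :
    ∃ C : ℕ, ∀ n : ℕ, 1 ≤ n →
      clCount (List.replicate (2 * n + 1) a ++ [b] ++ List.replicate n a) ≤ C * n := by
  refine ⟨9, fun n hn => ?_⟩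
  set W : List α := List.replicate (2 * n + 1) a ++ [b] ++ List.replicate n a with hWdef
  have hWeq : W = replicate (2*n+1) a ++ b :: replicate n a := by
    simp [hWdef]
  have hWlen : W.length = 3*n+2 := by simp [hWeq]; omega
  set S : Finset (List α) := (Finset.range (3*n+3)).image (fun k => replicate k a) ∪
           (Finset.range (2*n+1)).image (fun i => replicate i a ++ b :: replicate i a) with hS
  have hsub : closedFactors W ⊆ S := by
    intro u hu
    unfold closedFactors at hu
    rw [Finset.mem_filter] at hu
    obtain ⟨hmem, hcl⟩ := hu
    rw [List.mem_toFinset, List.mem_flatMap] at hmem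
    obtain ⟨t, ht, hut⟩ := hmem
    rw [List.mem_inits] at ht
    rw [List.mem_tails] at hut
    have hinf : u <:+: W := hut.isInfix.trans ht.isInfix
    have hmemab : ∀ x ∈ u, x = a ∨ x = b := by
      intro x hx
      have hxW : x ∈ W := hinf.subset hx
      rw [hWeq] at hxW
      simp only [List.mem_append, List.mem_cons, List.mem_replicate] at hxW
      tauto
    have hlenu : u.length ≤ 3*n+2 := hWlen ▸ hinf.length_le
    have hcount : count b u ≤ 1 := by
      have h1 : count b W = 1 := by
        rw [hWeq]
        simp [List.count_append, List.count_replicate, List.count_cons, hab]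
      have h2 := hinf.sublist.count_le b
      omega
    by_cases hb : b ∈ u
    · obtain ⟨x, y, rfl⟩ := List.append_of_mem hb
      have hc3 : count b (x ++ b :: y) = count b x + count b y + 1 := by
        simp [List.count_append, List.count_cons]
        omega
      have hcx : count b x = 0 := by omega
      have hcy : count b y = 0 := by omega
      rw [List.count_eq_zero] at hcx hcy
      have hx : x = replicate x.length a := by
        apply List.eq_replicate_of_mem
        intro z hz
        rcases hmemab z (by simp [hz]) with h | h
        · exact h
        · exact absurd (h ▸ hz) hcx
      have hy : y = replicate y.length a := by
        apply List.eq_replicate_of_mem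
        intro z hz
        rcases hmemab z (by simp [hz]) with h | h
        · exact h
        · exact absurd (h ▸ hz) hcy
      have hueq : x ++ b :: y = replicate x.length a ++ b :: replicate y.length a := by
        rw [← hx, ← hy]
      have hxy : x.length = y.length := by
        by_cases h0 : x.length + y.length = 0
        · omega
        · exact closed_imp_eq hab x.length y.length (by omega) (hueq ▸ hcl)
      have hlen2 : x.length + (y.length + 1) ≤ 3*n+2 := by
        have := hlenu
        simp only [List.length_append, List.length_cons] at this
        omega
      rw [hS]
      apply Finset.mem_union_right
      rw [Finset.mem_image]
      exact ⟨x.length, Finset.mem_range.mpr (by omega), by rw [hueq, hxy]⟩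
    · have hu2 : u = replicate u.length a := by
        apply List.eq_replicate_of_mem
        intro z hz
        rcases hmemab z hz with h | h
        · exact h
        · exact absurd (h ▸ hz) hb
      rw [hS]
      apply Finset.mem_union_left
      rw [Finset.mem_image]
      exact ⟨u.length, Finset.mem_range.mpr (by omega), hu2.symm⟩
  have hScard : S.card ≤ 5*n+4 := by
    calc S.card ≤ ((Finset.range (3*n+3)).image (fun k => replicate k a)).card +
        ((Finset.range (2*n+1)).image (fun i => replicate i a ++ b :: replicate i a)).card :=
          Finset.card_union_le _ _
      _ ≤ (3*n+3) + (2*n+1) := by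
          gcongr <;> exact (Finset.card_image_le).trans (by simp)
      _ = 5*n+4 := by ring
  have := Finset.card_le_card hsub
  unfold clCount
  omega
end

section
/- Let w be an infinite word of unbounded exponent (for every k there exists a factor of w with exponent at least k). Then w is not closed-rich: there is no constant C > 0 such that every factor of w of length n contains at least C·n² distinct closed factors. -/
open List

variable {α : Type*}

lemma period_shift {u : List α} {t : ℕ} (hp : _root_.HasPeriod u t) {i ℓ : ℕ}
    (hi : t ≤ i) (hil : i + ℓ ≤ u.length) :
    (u.drop i).take ℓ = (u.drop (i - t)).take ℓ := by
  obtain ⟨-, hpre⟩ := hp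
  apply List.ext_getElem
  · simp; omega
  · intro n h1 h2
    simp only [List.getElem_take, List.getElem_drop]
    have hlen : (u.drop t).length = u.length - t := by simp
    have hd : ∀ j (hj : j < u.length - t), u[t + j]'(by omega) = u[j]'(by omega) := by
      intro j hj
      have h' : j < (u.drop t).length := by simp; omega
      have := hpre.getElem h'
      simp only [List.getElem_drop] at this
      exact this
    have hkey := hd (i - t + n) (by simp at h1; omega)
    have he : t + (i - t + n) = i + n := by omega
    simp only [he] at hkey
    exact hkey
  
lemma period_reduce {u : List α} {t : ℕ} (hp : _root_.HasPeriod u t) :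
    ∀ i ℓ, i + ℓ ≤ u.length → ∃ i' < t, (u.drop i').take ℓ = (u.drop i).take ℓ := by
  intro i
  induction i using Nat.strong_induction_on with
  | _ i ih =>
    intro ℓ hil
    have ht : 0 < t := hp.1
    by_cases hi : i < t
    · exact ⟨i, hi, rfl⟩
    · obtain ⟨i', hi', he⟩ := ih (i - t) (by omega) ℓ (by omega)
      exact ⟨i', hi', he.trans (period_shift hp (by omega) hil).symm⟩

lemma clCount_le_of_period {u : List α} [DecidableEq α] {t : ℕ} (hp : _root_.HasPeriod u t) :
    clCount u ≤ t * (u.length + 1) := by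
  have hsub : closedFactors u ⊆ (Finset.range t ×ˢ Finset.range (u.length + 1)).image
      (fun p : ℕ × ℕ => (u.drop p.1).take p.2) := by
    intro v hv
    rw [closedFactors, Finset.mem_filter, List.mem_toFinset, List.mem_flatMap] at hv
    obtain ⟨⟨p, hp1, hp2⟩, -⟩ := hv
    rw [List.mem_inits] at hp1
    rw [List.mem_tails] at hp2
    have hinf : v <:+: u := hp2.isInfix.trans hp1.isInfix
    obtain ⟨s, t', rfl⟩ := hinf
    have hrep : (( (s ++ v ++ t').drop s.length).take v.length) = v := by
      rw [List.append_assoc, List.drop_left, List.take_left]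
    have hle : s.length + v.length ≤ (s ++ v ++ t').length := by
      simp only [List.length_append]; omega
    obtain ⟨i', hi', he⟩ := period_reduce hp s.length v.length hle
    rw [hrep] at he
    refine Finset.mem_image.2 ⟨⟨i', v.length⟩, ?_, he⟩
    simp only [Finset.mem_product, Finset.mem_range]
    constructor
    · exact hi'
    · simp only [List.length_append] at hle ⊢; omega
  calc clCount u ≤ _ := Finset.card_le_card hsub
    _ ≤ (Finset.range t ×ˢ Finset.range (u.length + 1)).card := Finset.card_image_le
    _ = t * (u.length + 1) := by simp

/-- an infinite word of unbounded exponent is not closed-rich. -/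
theorem stmt11 (w : ℕ → α) [DecidableEq α]
    (h : ∀ k : ℕ, ∃ i m t : ℕ, _root_.HasPeriod (factorAt w i m) t ∧ k * t ≤ m) :
    ¬ ∃ C : ℝ, 0 < C ∧ ∀ n i : ℕ,
        C * (n : ℝ) ^ 2 ≤ (clCount (factorAt w i n) : ℝ) := by
  rintro ⟨C, hC, hcl⟩
  obtain ⟨k, hk⟩ := exists_nat_gt (2 / C)
  obtain ⟨i, m, t, hp, hkt⟩ := h (k + 1)
  have hlen : (factorAt w i m).length = m := by simp [factorAt]
  have h1 : (clCount (factorAt w i m) : ℝ) ≤ (t : ℝ) * (m + 1) := by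
    have := clCount_le_of_period hp
    rw [hlen] at this
    exact_mod_cast this
  have h2 : C * (m : ℝ) ^ 2 ≤ (clCount (factorAt w i m) : ℝ) := hcl m i
  have ht1 : 1 ≤ t := hp.1
  have hm : k + 1 ≤ m := le_trans (Nat.le_mul_of_pos_right _ ht1) hkt
  have h3 : ((k : ℝ) + 1) * t ≤ m := by exact_mod_cast hkt
  have h4 : 2 < C * k := by
    rw [div_lt_iff₀ hC] at hk
    linarith [mul_comm C (k : ℝ)]
  have hmR : (1 : ℝ) ≤ m := by exact_mod_cast Nat.one_le_iff_ne_zero.2 (by omega)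
  have htR : (1 : ℝ) ≤ t := by exact_mod_cast ht1
  -- C * m^2 ≤ t*(m+1) ≤ 2*t*m ; (k+1)*t ≤ m ⇒ C*(k+1)*m^2 ≤ 2*m^2 ⇒ C*(k+1) ≤ 2
  have hkey : C * ((k : ℝ) + 1) ≤ 2 := by
    have hA : (0 : ℝ) < m := by linarith
    have e1 : C * (m : ℝ) ^ 2 ≤ 2 * t * m := by nlinarith
    have e2 : C * ((k : ℝ) + 1) * m ^ 2 ≤ 2 * m * m := by nlinarith
    nlinarith
  nlinarith
end

section
/- Let w be an infinite binary word and ε ∈ (0,1) such that there exists N with the property that for every factor x of w of length n > N, any two distinct occurrences of x in w are separated by distance at least (2−ε)^n. Then w has bounded exponent: there exists E such that every factor of w has exponent at most E. -/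
open List

variable {α : Type*}

lemma drop_factorAt (w : ℕ → Bool) (i m t : ℕ) :
    (factorAt w i m).drop t = factorAt w (i + t) (m - t) := by
  apply List.ext_getElem
  · simp [factorAt]
  · intro j h1 h2
    simp only [factorAt, List.getElem_drop, List.getElem_map, List.getElem_range]
    congr 1
    omega

lemma take_factorAt (w : ℕ → Bool) (i m k : ℕ) (h : k ≤ m) :
    (factorAt w i m).take k = factorAt w i k := by
  apply List.ext_getElem
  · simp [factorAt]; omega
  · intro j h1 h2
    simp [factorAt]

/-- an ε-Beck word (occurrences of each factor of length n > N separated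
by distance at least (2-ε)ⁿ) has bounded exponent. -/
theorem stmt14 (w : ℕ → Bool) (ε : ℝ) (hε0 : 0 < ε) (hε1 : ε < 1)
    (hBeck : ∃ N : ℕ, ∀ n : ℕ, N < n → ∀ i j : ℕ,
      factorAt w i n = factorAt w j n → i < j → (2 - ε) ^ n ≤ (j : ℝ) - (i : ℝ)) :
    ∃ E : ℝ, ∀ i m t : ℕ, _root_.HasPeriod (factorAt w i m) t → (m : ℝ) ≤ E * (t : ℝ) := by
  obtain ⟨N, hN⟩ := hBeck
  refine ⟨(N : ℝ) + 1 + 1 / (1 - ε), ?_⟩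
  intro i m t ⟨ht, hp⟩
  have ht1 : (1 : ℝ) ≤ t := by exact_mod_cast ht
  have hε : (0:ℝ) < 1 - ε := by linarith
  by_cases hm : m ≤ t + N
  · have : (m : ℝ) ≤ (t : ℝ) + N := by exact_mod_cast hm
    have h1 : (0:ℝ) < 1 / (1 - ε) := by positivity
    nlinarith
  · push_neg at hm
    have hmt : t ≤ m := by omega
    have hlen : ((factorAt w i m).drop t).length = m - t := by
      simp [factorAt]
    have heq1 : (factorAt w i m).take (m - t) = (factorAt w i m).drop t := by
      rw [← hlen]
      exact (List.prefix_iff_eq_take.mp hp).symm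
    have heq : factorAt w i (m - t) = factorAt w (i + t) (m - t) := by
      rw [← take_factorAt w i m (m - t) (by omega), heq1, drop_factorAt]
    have hkey := hN (m - t) (by omega) i (i + t) heq (by omega)
    have hbern : 1 + ((m - t : ℕ) : ℝ) * (1 - ε) ≤ (2 - ε) ^ (m - t) := by
      have := one_add_mul_le_pow (a := 1 - ε) (by linarith) (m - t)
      rw [show (2:ℝ) - ε = 1 + (1 - ε) by ring]; exact this
    have hcast : ((m - t : ℕ) : ℝ) = (m : ℝ) - t := by
      push_cast [hmt]; ring
    rw [hcast] at hbern
    have hji : ((i + t : ℕ) : ℝ) - (i : ℝ) = t := by push_cast; ring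
    rw [hji] at hkey
    have h2 : 1 + ((m : ℝ) - t) * (1 - ε) ≤ t := le_trans hbern hkey
    have hN0 : (0:ℝ) ≤ (N : ℝ) := Nat.cast_nonneg N
    rw [div_eq_mul_inv]
    have hinv : (0:ℝ) < (1 - ε)⁻¹ := by positivity
    have : (m : ℝ) - t ≤ (t - 1) * (1 - ε)⁻¹ := by
      rw [le_mul_inv_iff₀ hε]; linarith
    nlinarith
end

section
/- Let n be divisible by 3 and suppose there exists a word v of length n/3 over a finite alphabet all of whose factors of length ⌈log_{|A|}(n/3)⌉ are distinct (a de Bruijn-type word). Then the cube w = v³, of length n, contains at least n²/6 − (2n/3)·⌈log(n/3)⌉ + n/6 distinct closed factors. -/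
open List

variable {α : Type*}

lemma fac_getElem? (w : List α) (i m k : ℕ) :
    ((w.drop i).take m)[k]? = if k < m then w[i+k]? else none := by
  by_cases h : k < m
  · rw [getElem?_take_of_lt h, getElem?_drop, if_pos h]
  · rw [if_neg h, getElem?_eq_none]
    have h2 : ((w.drop i).take m).length = min m (w.length - i) := by
      rw [length_take, length_drop]
    omega

lemma fac_ext {w : List α} {i j m : ℕ} :
    (w.drop i).take m = (w.drop j).take m ↔ ∀ k < m, w[i+k]? = w[j+k]? := by
  constructor
  · intro h k hk
    have := congrArg (fun l => l[k]?) h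
    simpa [fac_getElem?, hk] using this
  · intro h
    apply List.ext_getElem?
    intro k
    rw [fac_getElem?, fac_getElem?]
    by_cases hk : k < m
    · simp only [if_pos hk, h k hk]
    · simp [hk]

lemma fac_length {w : List α} {i m : ℕ} (h : i + m ≤ w.length) :
    ((w.drop i).take m).length = m := by
  rw [length_take, length_drop]; omega

lemma fac_drop {w : List α} {i m r : ℕ} :
    ((w.drop i).take m).drop r = (w.drop (i + r)).take (m - r) := by
  rw [drop_take, drop_drop]

lemma fac_infix (w : List α) (i m : ℕ) :
    (w.drop i).take m = (w.take (i + m)).drop i := by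
  rw [drop_take]; congr 1; omega

lemma mem_closedFactors_of [DecidableEq α] {w z : List α} (i m : ℕ)
    (hz : z = (w.drop i).take m) (hc : ClosedWord z) : z ∈ closedFactors w := by
  rw [closedFactors, Finset.mem_filter]
  refine ⟨?_, hc⟩
  rw [List.mem_toFinset, List.mem_flatMap]
  refine ⟨w.take (i + m), ?_, ?_⟩
  · rw [List.mem_inits]; exact take_prefix _ _
  · rw [List.mem_tails, hz, fac_infix]
    exact drop_suffix _ _

lemma suffix_eq_drop {u z : List α} (h : u <:+ z) :
    z.drop (z.length - u.length) = u := by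
  obtain ⟨s, hs⟩ := h
  have hl : s.length = z.length - u.length := by
    have := congrArg List.length hs
    simp only [length_append] at this
    omega
  rw [← hl, ← hs, drop_left]

/-- Core lemma: a word with a nontrivial period strictly shorter than half its
length is closed. -/
lemma closed_of_period [DecidableEq α] (u : List α) (P : ℕ) (hP : 0 < P)
    (h2 : 2 * P < u.length)
    (hper : ∀ k, k + P < u.length → u[k + P]? = u[k]?) : ClosedWord u := by
  classical
  set m := u.length with hm
  have hex : ∃ q, 0 < q ∧ ∀ k, k + q < m → u[k + q]? = u[k]? := ⟨P, hP, hper⟩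
  set q := Nat.find hex with hqdef
  obtain ⟨hq0, hqper⟩ := Nat.find_spec hex
  have hqP : q ≤ P := Nat.find_min' hex ⟨hP, hper⟩
  have hq2 : 2 * q < m := by omega
  have hdrop : u.drop q = u.take (m - q) := by
    apply List.ext_getElem?
    intro k
    rw [getElem?_drop]
    by_cases hk : k < m - q
    · rw [getElem?_take_of_lt hk, Nat.add_comm q k]
      exact hqper k (by omega)
    · rw [getElem?_eq_none (by omega : m ≤ q + k), getElem?_eq_none]
      rw [length_take]; omega
  right
  refine ⟨m - q, ?_, ?_, ?_⟩
  · simp only [Finset.mem_Ioo]; omega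
  · rw [← hdrop]; exact drop_suffix q u
  · have hlen : (u.take (m - q)).length = m - q := by rw [length_take]; omega
    unfold occCount
    rw [show u.length = m from rfl]
    simp only [hlen]
    have hset : (Finset.range (m + 1)).filter
        (fun i => i + (m - q) ≤ m ∧ (u.drop i).take (m - q) = u.take (m - q)) =
        {0, q} := by
      ext i
      simp only [Finset.mem_filter, Finset.mem_range, Finset.mem_insert,
        Finset.mem_singleton]
      constructor
      · rintro ⟨hi1, hi2, hi3⟩
        by_contra hcon
        push_neg at hcon
        have hi0 : 0 < i := by omega
        have hiq : i < q := by omega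
        have hshort : ∀ k < m - q, u[i + k]? = u[0 + k]? := by
          have h0 : (u.drop i).take (m - q) = (u.drop 0).take (m - q) := by
            rw [hi3, drop_zero]
          exact fac_ext.mp h0
        have hPer : ∀ k, k + i < m → u[k + i]? = u[k]? := by
          intro k hk
          by_cases hkc : k < m - q
          · have := hshort k hkc
            simpa [Nat.add_comm] using this
          · have h1 : u[i + (k - q)]? = u[k - q]? := by
              have := hshort (k - q) (by omega)
              simpa using this
            have h2 : u[(k - q) + q]? = u[k - q]? := hqper (k - q) (by omega)
            have h3 : u[((k - q) + i) + q]? = u[(k - q) + i]? :=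
              hqper ((k - q) + i) (by omega)
            have e1 : (k - q) + q = k := by omega
            have e2 : ((k - q) + i) + q = k + i := by omega
            have e3 : i + (k - q) = (k - q) + i := by omega
            rw [e1] at h2
            rw [e2] at h3
            rw [e3] at h1
            rw [h3, h1, ← h2]
        exact Nat.find_min hex hiq ⟨hi0, hPer⟩
      · rintro (rfl | rfl)
        · exact ⟨by omega, by omega, by rw [drop_zero]⟩
        · refine ⟨by omega, by omega, ?_⟩
          rw [hdrop, take_of_length_le (by rw [hlen])]
    rw [hset, Finset.card_insert_of_notMem (by simp; omega), Finset.card_singleton]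

/-- If `u` and a strictly longer `u'` are both prefixes and suffixes of `z`,
with `u'` shorter than `z`, then `u` occurs at least 3 times in `z`. -/
lemma occCount_ge_three [DecidableEq α] (z u u' : List α)
    (hlt : u.length < u'.length)
    (hu : z.take u.length = u) (hu' : z.take u'.length = u')
    (hsu : u <:+ z) (hsu' : u' <:+ z) (hzl : u'.length < z.length) :
    3 ≤ occCount u z := by
  classical
  set m := u.length with hm
  set a := u'.length - m with ha
  set b := z.length - m with hb
  have hmz : m < z.length := by omega
  have hdropb : z.drop b = u := suffix_eq_drop hsu
  have hdropu' : z.drop (z.length - u'.length) = u' := suffix_eq_drop hsu'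
  have husuf : u'.drop a = u := by
    have : (z.drop (z.length - u'.length)).drop a = z.drop b := by
      rw [drop_drop]; congr 1; omega
    rw [hdropu'] at this; rw [this, hdropb]
  have hmem : ∀ r ∈ ({0, a, b} : Finset ℕ),
      r ∈ (Finset.range (z.length + 1)).filter
        (fun i => i + u.length ≤ z.length ∧ (z.drop i).take u.length = u) := by
    intro r hr
    simp only [Finset.mem_insert, Finset.mem_singleton] at hr
    rw [Finset.mem_filter, Finset.mem_range]
    rcases hr with rfl | rfl | rfl
    · exact ⟨by omega, by omega, by rw [drop_zero, hu]⟩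
    · refine ⟨by omega, by omega, ?_⟩
      have h1 : (z.drop a).take m = (z.take u'.length).drop a := by
        rw [drop_take, show u'.length - a = m from by omega]
      rw [h1, hu', husuf]
    · refine ⟨by omega, by omega, ?_⟩
      rw [hdropb, take_of_length_le (le_refl _)]
  have hcard : ({0, a, b} : Finset ℕ).card = 3 := by
    rw [Finset.card_insert_of_notMem (by simp; omega),
      Finset.card_insert_of_notMem (by simp; omega), Finset.card_singleton]
  calc (3 : ℕ) = ({0, a, b} : Finset ℕ).card := hcard.symm
    _ ≤ _ := Finset.card_le_card (fun r hr => hmem r hr)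

/-- Construction of a closed factor of `w` from a factor `u` occurring twice. -/
lemma exists_closed_double [DecidableEq α] (w u : List α) (hu : 0 < u.length)
    (a G : ℕ) (hG : 0 < G)
    (ha : a + u.length ≤ w.length) (hocc : (w.drop a).take u.length = u)
    (hstep : ∀ x ≤ a, (w.drop x).take u.length = u →
      (x + G) + u.length ≤ w.length ∧ (w.drop (x + G)).take u.length = u) :
    ∃ z, z ∈ closedFactors w ∧ z.take u.length = u ∧ u <:+ z ∧
      occCount u z = 2 ∧ u.length < z.length ∧ z.length ≤ u.length + G := by
  classical
  set m := u.length with hm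
  have hexa : ∃ x, x + m ≤ w.length ∧ (w.drop x).take m = u := ⟨a, ha, hocc⟩
  set a' := Nat.find hexa with ha'
  obtain ⟨ha'1, ha'2⟩ := Nat.find_spec hexa
  have ha'a : a' ≤ a := Nat.find_min' hexa ⟨ha, hocc⟩
  obtain ⟨hstep1, hstep2⟩ := hstep a' ha'a ha'2
  have hexb : ∃ x, a' < x ∧ x + m ≤ w.length ∧ (w.drop x).take m = u :=
    ⟨a' + G, by omega, hstep1, hstep2⟩
  set b' := Nat.find hexb with hb'
  obtain ⟨hb'1, hb'2, hb'3⟩ := Nat.find_spec hexb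
  have hb'G : b' ≤ a' + G := Nat.find_min' hexb ⟨by omega, hstep1, hstep2⟩
  set D := b' - a' with hD
  have hD0 : 0 < D := by omega
  set z := (w.drop a').take (D + m) with hz
  have hzlen : z.length = D + m := by rw [hz, fac_length]; omega
  have hztake : z.take m = u := by
    rw [hz, take_take, min_eq_left (by omega), ha'2]
  have hzdrop : ∀ r, r ≤ D → (z.drop r).take m = (w.drop (a' + r)).take m := by
    intro r hr
    rw [hz, fac_drop, take_take, min_eq_left (by omega)]
  have hzsuf : u <:+ z := by
    have h1 : z.drop D = (w.drop b').take m := by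
      rw [hz, fac_drop]
      have e1 : D + m - D = m := by omega
      have e2 : a' + D = b' := by omega
      rw [e1, e2]
    have h2 : z.drop D = u := by rw [h1, hb'3]
    rw [← h2]; exact drop_suffix _ _
  have hocc2 : occCount u z = 2 := by
    unfold occCount
    have hset : (Finset.range (z.length + 1)).filter
        (fun i => i + u.length ≤ z.length ∧ (z.drop i).take u.length = u) =
        {0, D} := by
      ext i
      simp only [Finset.mem_filter, Finset.mem_range, Finset.mem_insert,
        Finset.mem_singleton]
      constructor
      · rintro ⟨hi1, hi2, hi3⟩
        by_contra hcon
        push_neg at hcon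
        have hi0 : 0 < i := by omega
        have hiD : i < D := by omega
        have hfac : (w.drop (a' + i)).take m = u := by
          rw [← hzdrop i (by omega)]; exact hi3
        exact Nat.find_min hexb (show a' + i < b' by omega)
          ⟨by omega, by omega, hfac⟩
      · rintro (rfl | rfl)
        · exact ⟨by omega, by omega, by rw [drop_zero, hztake]⟩
        · refine ⟨by omega, by omega, ?_⟩
          rw [hzdrop D (le_refl _)]
          have : a' + D = b' := by omega
          rw [this, hb'3]
    rw [hset, Finset.card_insert_of_notMem (by simp; omega),
      Finset.card_singleton]
  have hcz : ClosedWord z := by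
    right
    refine ⟨m, ?_, ?_, ?_⟩
    · simp only [Finset.mem_Ioo]; omega
    · rw [hztake]; exact hzsuf
    · rw [hztake]; exact hocc2
  exact ⟨z, mem_closedFactors_of a' (D + m) hz hcz, hztake, hzsuf, hocc2,
    by omega, by omega⟩

lemma cube_getElem?_left (v : List α) (x : ℕ) (hx : x < 2 * v.length) :
    (v ++ v ++ v)[x]? = (v ++ v)[x]? := by
  rw [getElem?_append]
  simp only [length_append]
  rw [if_pos (by omega)]

lemma cube_period (v : List α) (x : ℕ) (hx : x < 2 * v.length) :
    (v ++ v ++ v)[x + v.length]? = (v ++ v ++ v)[x]? := by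
  rw [cube_getElem?_left v x hx, append_assoc, getElem?_append]
  rw [if_neg (by omega)]
  congr 1
  omega

lemma cube_mid (v : List α) (x : ℕ) (hx : x < v.length) :
    (v ++ v ++ v)[v.length + x]? = v[x]? := by
  rw [append_assoc, getElem?_append, if_neg (by omega), getElem?_append,
    if_pos (by omega : v.length + x - v.length < v.length)]
  congr 1
  omega

lemma cube_left (v : List α) (x : ℕ) (hx : x < v.length) :
    (v ++ v ++ v)[x]? = v[x]? := by
  rw [append_assoc, getElem?_append, if_pos (by omega)]

/-- Gauss-type sum identity. -/
lemma gauss_sum (p : ℕ) : ∀ t, t ≤ p →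
    2 * (∑ i ∈ Finset.range t, (p - i)) + t * t = t * (2 * p + 1) := by
  intro t
  induction t with
  | zero => simp
  | succ t ih =>
    intro ht
    rw [Finset.sum_range_succ]
    have h1 := ih (by omega)
    have h2 : (t + 1) * (t + 1) = t * t + 2 * t + 1 := by ring
    have h3 : (t + 1) * (2 * p + 1) = t * (2 * p + 1) + 2 * p + 1 := by ring
    omega

/-- if v has length n/3 (3 | n) and all factors of v of length
L = ⌈log_{|A|}(n/3)⌉ are distinct, then the cube v³ contains at least
n²/6 - (2n/3)·L + n/6 distinct closed factors. -/
theorem stmt19 {α : Type*} [Fintype α] [DecidableEq α] (n : ℕ) (v : List α)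
    (h3 : 3 * v.length = n) (L : ℕ) (hL : L = Nat.clog (Fintype.card α) (n / 3))
    (hdB : ∀ i j : ℕ, i + L ≤ v.length → j + L ≤ v.length →
      (v.drop i).take L = (v.drop j).take L → i = j) :
    n ^ 2 + n ≤ 6 * clCount (v ++ v ++ v) + 4 * n * L := by
  classical
  subst h3
  clear hL
  set p := v.length with hpdef
  set w := v ++ v ++ v with hwdef
  have hwlen : w.length = 3 * p := by
    simp only [hwdef, length_append]
    omega
  rcases Nat.eq_zero_or_pos p with hp0 | hp0
  · rw [hp0]; simp
  rcases le_or_gt L p with hLp | hLp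
  swap
  · -- trivial case L > p
    have h1 : (3*p)^2 + 3*p ≤ 4*(3*p)*L := by nlinarith
    exact le_trans h1 (Nat.le_add_left _ _)
  have hL1 : 1 ≤ L := by
    by_contra h
    have hL0 : L = 0 := by omega
    have := hdB 0 1 (by omega) (by omega) (by simp [hL0])
    omega
  set t := p + 1 - L with htdef
  have ht1 : 1 ≤ t := by omega
  have htp : t ≤ p := by omega
  have wper : ∀ x, x + p < 3 * p → w[x + p]? = w[x]? := by
    intro x hx; exact cube_period v x (by omega)
  have wmid : ∀ x, x < p → w[p + x]? = v[x]? := fun x hx => cube_mid v x hx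
  have wleft : ∀ x, x < p → w[x]? = v[x]? := fun x hx => cube_left v x hx
  have hwv : ∀ i, i + L ≤ p → (w.drop i).take L = (v.drop i).take L := by
    intro i hi
    apply List.ext_getElem?
    intro k
    rw [fac_getElem?, fac_getElem?]
    by_cases hk : k < L
    · rw [if_pos hk, if_pos hk, wleft (i+k) (by omega)]
    · rw [if_neg hk, if_neg hk]
  -- key distinctness for long factors
  have hkey : ∀ i i' m, i < t → i' < t → 2 * p + 1 ≤ m → i + m ≤ 3*p →
      i' + m ≤ 3*p → (w.drop i).take m = (w.drop i').take m → i = i' := by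
    have main : ∀ i d m, i < t → 0 < d → d < t → 2*p+1 ≤ m → i + d + m ≤ 3*p →
        (w.drop i).take m = (w.drop (i+d)).take m → False := by
      intro i d m hi hd0 hdt hm hbound heq
      have hfe := fac_ext.mp heq
      have hvper : ∀ k, k + d < p → v[k]? = v[k + d]? := by
        intro k hk
        have e1 : v[k]? = w[p + k]? := (wmid k (by omega)).symm
        have e2 : v[k+d]? = w[p + (k+d)]? := (wmid (k+d) (by omega)).symm
        rw [e1, e2]
        have hk' : p + k - i < m := by omega
        have hthis := hfe (p + k - i) hk'
        rw [show i + (p + k - i) = p + k from by omega,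
          show i + d + (p + k - i) = p + (k + d) from by omega] at hthis
        exact hthis
      have hfeq : (v.drop 0).take L = (v.drop d).take L := by
        apply fac_ext.mpr
        intro k hk
        have hthis := hvper k (by omega)
        simpa [Nat.add_comm] using hthis
      have := hdB 0 d (by omega) (by omega) hfeq
      omega
    intro i i' m hi hi' hm hb hb' heq
    rcases lt_trichotomy i i' with h | h | h
    · exact absurd heq (fun heq => main i (i'-i) m hi (by omega) (by omega) hm
        (by omega) (by rw [show i + (i'-i) = i' from by omega]; exact heq))
    · exact h
    · exact absurd heq (fun heq => main i' (i-i') m hi' (by omega) (by omega) hm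
        (by omega) (by rw [show i' + (i-i') = i from by omega]; exact heq.symm))
  -- Family 1
  set F1 : ℕ × ℕ → List α := fun q => (w.drop q.1).take (q.2 - q.1) with hF1def
  set S1 : Finset (ℕ × ℕ) := (Finset.range t).biUnion
      (fun i => (Finset.Icc (2*p+1+i) (3*p)).image (fun e => (i, e))) with hS1def
  have hS1mem : ∀ q : ℕ × ℕ, q ∈ S1 ↔ q.1 < t ∧ 2*p+1+q.1 ≤ q.2 ∧ q.2 ≤ 3*p := by
    intro q
    simp only [hS1def, Finset.mem_biUnion, Finset.mem_image, Finset.mem_Icc,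
      Finset.mem_range]
    constructor
    · rintro ⟨i, hi, e, ⟨he1, he2⟩, rfl⟩; exact ⟨hi, he1, he2⟩
    · rintro ⟨h1, h2, h3⟩; exact ⟨q.1, h1, q.2, ⟨h2, h3⟩, rfl⟩
  have hS1card : S1.card = ∑ i ∈ Finset.range t, (p - i) := by
    rw [hS1def, Finset.card_biUnion]
    · apply Finset.sum_congr rfl
      intro i _
      rw [Finset.card_image_of_injective _ (fun a b h => by
        simpa using congrArg Prod.snd h), Nat.card_Icc]
      omega
    · intro x _ y _ hxy
      simp only [Finset.disjoint_left, Finset.mem_image, Finset.mem_Icc]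
      rintro a ⟨e, _, rfl⟩ ⟨e', _, h'⟩
      exact hxy (congrArg Prod.fst h').symm
  have hF1mem : ∀ q ∈ S1, F1 q ∈ closedFactors w := by
    intro q hq
    rw [hS1mem] at hq
    obtain ⟨h1, h2, h3⟩ := hq
    apply mem_closedFactors_of q.1 (q.2 - q.1) (by rw [hF1def])
    apply closed_of_period _ p hp0
    · rw [hF1def]
      rw [fac_length (by omega)]
      omega
    · intro k hk
      rw [hF1def] at hk ⊢
      rw [fac_length (by omega)] at hk
      rw [fac_getElem?, fac_getElem?, if_pos (by omega : k + p < q.2 - q.1),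
        if_pos (by omega : k < q.2 - q.1)]
      have hthis := wper (q.1 + k) (by omega)
      rw [show q.1 + (k + p) = (q.1 + k) + p from by omega]
      exact hthis
  have hF1inj : Set.InjOn F1 S1 := by
    intro q hq q' hq' heq
    rw [Finset.mem_coe, hS1mem] at hq hq'
    obtain ⟨h1, h2, h3⟩ := hq
    obtain ⟨h1', h2', h3'⟩ := hq'
    rw [hF1def] at heq
    simp only at heq
    have hlen : q.2 - q.1 = q'.2 - q'.1 := by
      have hc := congrArg List.length heq
      rw [fac_length (by omega), fac_length (by omega)] at hc
      exact hc
    rw [← hlen] at heq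
    have hii : q.1 = q'.1 := hkey q.1 q'.1 (q.2 - q.1) h1 h1' (by omega)
      (by omega) (by omega) heq
    have hee : q.2 = q'.2 := by omega
    exact Prod.ext hii hee
  -- Family 2
  set S2 : Finset (ℕ × ℕ) := (Finset.range t) ×ˢ (Finset.Icc L p) with hS2def
  have hS2mem : ∀ q : ℕ × ℕ, q ∈ S2 ↔ q.1 < t ∧ L ≤ q.2 ∧ q.2 ≤ p := by
    intro q
    simp only [hS2def, Finset.mem_product, Finset.mem_range, Finset.mem_Icc]
  have hS2card : S2.card = t * t := by
    rw [hS2def, Finset.card_product, Finset.card_range, Nat.card_Icc,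
      show p + 1 - L = t from by omega]
  have hZ : ∀ q : ℕ × ℕ, ∃ z, q ∈ S2 →
      z ∈ closedFactors w ∧ z.take q.2 = (w.drop q.1).take q.2 ∧
      (w.drop q.1).take q.2 <:+ z ∧ occCount ((w.drop q.1).take q.2) z = 2 ∧
      q.2 < z.length ∧ z.length ≤ q.2 + p := by
    intro q
    by_cases hq : q ∈ S2
    · rw [hS2mem] at hq
      obtain ⟨hi, hmL, hmp⟩ := hq
      have hul : ((w.drop q.1).take q.2).length = q.2 := fac_length (by omega)
      have hstep : ∀ x ≤ q.1,
          (w.drop x).take ((w.drop q.1).take q.2).length = (w.drop q.1).take q.2 →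
          (x + p) + ((w.drop q.1).take q.2).length ≤ w.length ∧
          (w.drop (x + p)).take ((w.drop q.1).take q.2).length =
            (w.drop q.1).take q.2 := by
        intro x hx hfx
        rw [hul] at hfx ⊢
        refine ⟨by omega, ?_⟩
        rw [← hfx]
        apply fac_ext.mpr
        intro k hk
        have hthis := wper (x + k) (by omega)
        rw [show x + p + k = (x + k) + p from by omega]
        exact hthis
      obtain ⟨z, hz1, hz2, hz3, hz4, hz5, hz6⟩ :=
        exists_closed_double w ((w.drop q.1).take q.2) (by omega) q.1 p hp0
          (by rw [hul]; omega) (by rw [hul]) hstep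
      rw [hul] at hz2 hz5 hz6
      exact ⟨z, fun _ => ⟨hz1, hz2, hz3, hz4, hz5, hz6⟩⟩
    · exact ⟨[], fun h => absurd h hq⟩
  choose f2 hf2 using hZ
  have hF2mem : ∀ q ∈ S2, f2 q ∈ closedFactors w := fun q hq => (hf2 q hq).1
  have hF2inj : Set.InjOn f2 S2 := by
    intro q hq q' hq' heq
    rw [Finset.mem_coe] at hq hq'
    have hq2 := (hS2mem q).mp hq
    have hq2' := (hS2mem q').mp hq'
    obtain ⟨hz1, hz2, hz3, hz4, hz5, hz6⟩ := hf2 q hq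
    obtain ⟨hz1', hz2', hz3', hz4', hz5', hz6'⟩ := hf2 q' hq'
    rw [← heq] at hz2' hz3' hz4' hz5' hz6'
    have hul : ((w.drop q.1).take q.2).length = q.2 := fac_length (by omega)
    have hul' : ((w.drop q'.1).take q'.2).length = q'.2 := fac_length (by omega)
    have hmm : q.2 = q'.2 := by
      by_contra hne
      rcases lt_or_gt_of_ne hne with h | h
      · have h3 := occCount_ge_three (f2 q) ((w.drop q.1).take q.2)
          ((w.drop q'.1).take q'.2) (by omega) (by rw [hul]; exact hz2)
          (by rw [hul']; exact hz2') hz3 hz3' (by omega)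
        omega
      · have h3 := occCount_ge_three (f2 q) ((w.drop q'.1).take q'.2)
          ((w.drop q.1).take q.2) (by omega) (by rw [hul']; exact hz2')
          (by rw [hul]; exact hz2) hz3' hz3 (by omega)
        omega
    have huu : (w.drop q.1).take q.2 = (w.drop q'.1).take q.2 := by
      rw [← hz2, hmm, hz2']
    have hiL : q.1 + L ≤ p := by omega
    have hiL' : q'.1 + L ≤ p := by omega
    have h5 : (v.drop q.1).take L = (v.drop q'.1).take L := by
      rw [← hwv q.1 hiL, ← hwv q'.1 hiL']
      have e : (w.drop q.1).take L = ((w.drop q.1).take q.2).take L := by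
        rw [take_take, min_eq_left hq2.2.1]
      have e' : (w.drop q'.1).take L = ((w.drop q'.1).take q.2).take L := by
        rw [take_take, min_eq_left (by omega)]
      rw [e, e', huu]
    have := hdB q.1 q'.1 hiL hiL' h5
    have hee : q.2 = q'.2 := hmm
    exact Prod.ext this hee
  -- disjointness of images
  have hdisj : Disjoint (S1.image F1) (S2.image f2) := by
    rw [Finset.disjoint_left]
    rintro x hx1 hx2
    rw [Finset.mem_image] at hx1 hx2
    obtain ⟨q, hq, rfl⟩ := hx1
    obtain ⟨q', hq', hx⟩ := hx2
    rw [hS1mem] at hq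
    have h2' := (hS2mem q').mp hq'
    have hlen1 : (F1 q).length = q.2 - q.1 := by
      rw [hF1def]; exact fac_length (by omega)
    have h6 := (hf2 q' hq').2.2.2.2.2
    rw [hx] at h6
    omega
  -- counting
  have hsub : S1.image F1 ∪ S2.image f2 ⊆ closedFactors w := by
    intro x hx
    rcases Finset.mem_union.mp hx with h | h
    · obtain ⟨q, hq, rfl⟩ := Finset.mem_image.mp h
      exact hF1mem q hq
    · obtain ⟨q, hq, rfl⟩ := Finset.mem_image.mp h
      exact hF2mem q hq
  have hcount : S1.card + S2.card ≤ (closedFactors w).card := by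
    calc S1.card + S2.card = (S1.image F1).card + (S2.image f2).card := by
          rw [Finset.card_image_of_injOn hF1inj, Finset.card_image_of_injOn hF2inj]
      _ = (S1.image F1 ∪ S2.image f2).card :=
          (Finset.card_union_of_disjoint hdisj).symm
      _ ≤ _ := Finset.card_le_card hsub
  have hgauss := gauss_sum p t htp
  have hclc : clCount w = (closedFactors w).card := rfl
  have hcl : (∑ i ∈ Finset.range t, (p - i)) + t * t ≤ clCount w := by
    rw [hclc]; omega
  have e2 : p * L + p * t = p * p + p := by
    have hLt : L + t = p + 1 := by omega
    calc p*L + p*t = p*(L+t) := by ring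
      _ = p*(p+1) := by rw [hLt]
      _ = p*p + p := by ring
  have e3 : 2 * (p * t) ≤ p * p + t * t := by nlinarith
  have e4 : t * (2*p+1) = 2*(p*t) + t := by ring
  have egoal : (3*p)^2 = 9*(p*p) := by ring
  have e5 : 4*(3*p)*L = 12*(p*L) := by ring
  rw [egoal]
  rw [e5]
  linarith [hcl, hgauss, e2, e3, e4]
end
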